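/- arXiv:1505.04479 — 5 statements merged into one kernel-verified Lean document; each statement's English description precedes it below -/
import Mathlib

section
/- For every n ≥ 1 there exists a bijection θ from the group 𝒞_n of type C_n mirrored permutations to the group ℬ_n of signed permutations on n letters such that for every S ⊆ {2,3,…,n}, setting R = {n−i+1 : i ∈ S}, θ maps hat{P}_C(S;n) bijectively onto hat{P}_B(R;n). -/
open Equiv

/-- Position `i` (1-based, with `1 < i < n`) is a peak of the permutation `π ∈ S_n`.
The value of `π` at 1-based position `j` is `π ⟨j - 1, _⟩`; values are 0-based
(`π i = v` means the written value is `v + 1`). -/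
def IsPeak {n : ℕ} (π : Equiv.Perm (Fin n)) (i : ℕ) : Prop :=
  ∃ h : 1 < i ∧ i < n,
    π ⟨i - 2, by omega⟩ < π ⟨i - 1, by omega⟩ ∧ π ⟨i, by omega⟩ < π ⟨i - 1, by omega⟩

/-- `P(S;n)`: permutations in `S_n` with peak set `S`. -/
def peakSetEq (n : ℕ) (S : Finset ℕ) : Set (Equiv.Perm (Fin n)) :=
  {π | ∀ i : ℕ, IsPeak π i ↔ i ∈ S}

/-- `π` ends with an ascent to `k`: `π_{n-1} < π_n` and `π_n = k` (values written `1..n`). -/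
def EndsAscentTo (n k : ℕ) (π : Equiv.Perm (Fin n)) : Prop :=
  ∃ h : 2 ≤ n, π ⟨n - 2, by omega⟩ < π ⟨n - 1, by omega⟩ ∧ ((π ⟨n - 1, by omega⟩ : ℕ) + 1 = k)

/-- `π` ends with a descent to `k`: `π_{n-1} > π_n` and `π_n = k`. -/
def EndsDescentTo (n k : ℕ) (π : Equiv.Perm (Fin n)) : Prop :=
  ∃ h : 2 ≤ n, π ⟨n - 1, by omega⟩ < π ⟨n - 2, by omega⟩ ∧ ((π ⟨n - 1, by omega⟩ : ℕ) + 1 = k)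

/-- `π` ends with an ascent: `π_{n-1} < π_n`. -/
def EndsAscent (n : ℕ) (π : Equiv.Perm (Fin n)) : Prop :=
  ∃ h : 2 ≤ n, π ⟨n - 2, by omega⟩ < π ⟨n - 1, by omega⟩

/-- `π` ends with a descent: `π_{n-1} > π_n`. -/
def EndsDescent (n : ℕ) (π : Equiv.Perm (Fin n)) : Prop :=
  ∃ h : 2 ≤ n, π ⟨n - 1, by omega⟩ < π ⟨n - 2, by omega⟩

/-- `P(S;n)^{↗k}` -/
def ascTo (n : ℕ) (S : Finset ℕ) (k : ℕ) : Set (Equiv.Perm (Fin n)) :=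
  {π ∈ peakSetEq n S | EndsAscentTo n k π}

/-- `P(S;n)_{↘k}` -/
def descTo (n : ℕ) (S : Finset ℕ) (k : ℕ) : Set (Equiv.Perm (Fin n)) :=
  {π ∈ peakSetEq n S | EndsDescentTo n k π}

/-- `overline{P(S;n)}`: elements of `P(S;n)` ending with an ascent. -/
def overlineP (n : ℕ) (S : Finset ℕ) : Set (Equiv.Perm (Fin n)) :=
  {π ∈ peakSetEq n S | EndsAscent n π}

/-- `underline{P(S;n)}`: elements of `P(S;n)` ending with a descent. -/
def underlineP (n : ℕ) (S : Finset ℕ) : Set (Equiv.Perm (Fin n)) :=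
  {π ∈ peakSetEq n S | EndsDescent n π}

/-- Type `C_n` mirrored permutations: `τ_{2n-i+1} = 2n - τ_i + 1` for all `1 ≤ i ≤ 2n`
(1-based); equivalently `τ (j.rev) = (τ j).rev` in 0-based `Fin (2*n)` terms. -/
def mirroredC (n : ℕ) : Set (Equiv.Perm (Fin (2 * n))) :=
  {τ | ∀ j, τ j.rev = (τ j).rev}

/-- Type `D_n` mirrored permutations: mirrored, and the first `n` positions carry an even
number of values from `{n+1, …, 2n}` (i.e. 0-based values `≥ n`). -/
def mirroredD (n : ℕ) : Set (Equiv.Perm (Fin (2 * n))) :=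
  {τ | (∀ j, τ j.rev = (τ j).rev) ∧
    Even ((Finset.univ.filter fun j : Fin (2 * n) => (j : ℕ) < n ∧ n ≤ (τ j : ℕ)).card)}

/-- The pattern bundle `𝒞_n(π)`: mirrored permutations whose first `n` entries have the
same relative order as `π`. -/
def bundleC (n : ℕ) (π : Equiv.Perm (Fin n)) : Set (Equiv.Perm (Fin (2 * n))) :=
  {τ ∈ mirroredC n | ∀ i j : Fin n,
    τ (Fin.castLE (by omega) i) < τ (Fin.castLE (by omega) j) ↔ π i < π j}

/-- The pattern bundle `𝒟_n(π)`. -/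
def bundleD (n : ℕ) (π : Equiv.Perm (Fin n)) : Set (Equiv.Perm (Fin (2 * n))) :=
  {τ ∈ mirroredD n | ∀ i j : Fin n,
    τ (Fin.castLE (by omega) i) < τ (Fin.castLE (by omega) j) ↔ π i < π j}

/-- Position `i` (1-based, `1 < i < n`) is a peak of the first `n` entries of `τ`. -/
def IsPeakFirst (n : ℕ) (τ : Equiv.Perm (Fin (2 * n))) (i : ℕ) : Prop :=
  ∃ h : 1 < i ∧ i < n,
    τ ⟨i - 2, by omega⟩ < τ ⟨i - 1, by omega⟩ ∧ τ ⟨i, by omega⟩ < τ ⟨i - 1, by omega⟩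

/-- `P_C(S;n)`: mirrored permutations of type `C_n` whose first `n` entries have peak set `S`. -/
def P_C (n : ℕ) (S : Finset ℕ) : Set (Equiv.Perm (Fin (2 * n))) :=
  {τ ∈ mirroredC n | ∀ i : ℕ, IsPeakFirst n τ i ↔ i ∈ S}

/-- `P_D(S;n)`. -/
def P_D (n : ℕ) (S : Finset ℕ) : Set (Equiv.Perm (Fin (2 * n))) :=
  {τ ∈ mirroredD n | ∀ i : ℕ, IsPeakFirst n τ i ↔ i ∈ S}

/-- Position `i` (1-based, `1 < i ≤ n`) is a peak of the first `n+1` entries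
`τ_1 ⋯ τ_n τ_{n+1}` of `τ` (so a peak at position `n` is possible). -/
def IsPeakHat (n : ℕ) (τ : Equiv.Perm (Fin (2 * n))) (i : ℕ) : Prop :=
  ∃ h : 1 < i ∧ i ≤ n,
    τ ⟨i - 2, by omega⟩ < τ ⟨i - 1, by omega⟩ ∧ τ ⟨i, by omega⟩ < τ ⟨i - 1, by omega⟩

/-- `hat{P}_C(S;n)`: mirrored permutations of type `C_n` such that `τ_1 ⋯ τ_n τ_{n+1}`
has peak set `S`. -/
def hatPC (n : ℕ) (S : Finset ℕ) : Set (Equiv.Perm (Fin (2 * n))) :=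
  {τ ∈ mirroredC n | ∀ i : ℕ, IsPeakHat n τ i ↔ i ∈ S}

/-- `hat{P}_D(S;n)`. -/
def hatPD (n : ℕ) (S : Finset ℕ) : Set (Equiv.Perm (Fin (2 * n))) :=
  {τ ∈ mirroredD n | ∀ i : ℕ, IsPeakHat n τ i ↔ i ∈ S}

/-- `Φ(n,k) = Σ_{i=k}^n C(n,i)`. -/
def Phi (n k : ℕ) : ℕ := ∑ i ∈ Finset.Icc k n, n.choose i

/-- `Ψ(n,k) = 2^n - Φ(n,k)`. -/
def Psi (n k : ℕ) : ℕ := 2 ^ n - Phi n k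

/-- The group `ℬ_n` of signed permutations on `n` letters. -/
def SignedPerms (n : ℕ) : Set (Fin n → ℤ) :=
  {β | (∀ i, 1 ≤ |β i| ∧ |β i| ≤ (n : ℤ)) ∧ Function.Injective fun i => |β i|}

/-- Position `i` (`1 ≤ i ≤ n - 1`) is a peak of the sequence `0, β_1, …, β_n`. -/
def IsPeakB (n : ℕ) (β : Fin n → ℤ) (i : ℕ) : Prop :=
  ∃ h : 1 ≤ i ∧ i < n,
    (if hi : 2 ≤ i then β ⟨i - 2, by omega⟩ else 0) < β ⟨i - 1, by omega⟩ ∧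
      β ⟨i, by omega⟩ < β ⟨i - 1, by omega⟩

/-- `hat{P}_B(R;n)`: signed permutations such that `0, β_1, …, β_n` has peak set `R`. -/
def hatPB (n : ℕ) (R : Finset ℕ) : Set (Fin n → ℤ) :=
  {β ∈ SignedPerms n | ∀ i : ℕ, IsPeakB n β i ↔ i ∈ R}


namespace Stmt10

def encA (n v : ℕ) : ℤ := if n ≤ v then (v : ℤ) - n + 1 else (v : ℤ) - n

lemma encA_lt {n v w : ℕ} : encA n v < encA n w ↔ v < w := by
  simp only [encA]; split_ifs <;> omega

lemma encA_inj {n v w : ℕ} (h : encA n v = encA n w) : v = w := by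
  revert h; simp only [encA]; split_ifs <;> omega

lemma encA_pos {n v : ℕ} : 0 < encA n v ↔ n ≤ v := by
  simp only [encA]; split_ifs <;> omega

lemma encA_abs {n v : ℕ} (hv : v < 2 * n) : 1 ≤ |encA n v| ∧ |encA n v| ≤ (n : ℤ) := by
  rw [le_abs, abs_le]
  simp only [encA]; split_ifs <;> omega

lemma encA_abs_eq {n v w : ℕ} (hv : v < 2 * n) (hw : w < 2 * n)
    (h : |encA n v| = |encA n w|) : v = w ∨ v + w = 2 * n - 1 := by
  rw [abs_eq_abs] at h
  revert h; simp only [encA]; split_ifs <;> omega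

lemma encA_neg {n v w : ℕ} (hv : v < 2 * n) (hw : w < 2 * n)
    (h : v + w = 2 * n - 1) : encA n v = -encA n w := by
  simp only [encA]; split_ifs <;> omega

def decN (n : ℕ) (b : ℤ) : ℕ :=
  min (2 * n - 1) (if 0 < b then (b + n - 1).toNat else (b + n).toNat)

lemma decN_lt {n : ℕ} (hn : 1 ≤ n) (b : ℤ) : decN n b < 2 * n := by
  simp only [decN]; omega

lemma encA_decN {n : ℕ} (hn : 1 ≤ n) {b : ℤ} (h1 : 1 ≤ |b|) (h2 : |b| ≤ (n : ℤ)) :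
    encA n (decN n b) = b := by
  rw [le_abs] at h1; rw [abs_le] at h2
  simp only [encA, decN]
  split_ifs <;> omega

def bval (n : ℕ) (β : Fin n → ℤ) (a : ℕ) : ℤ := if h : a < n then β ⟨a, h⟩ else 0

lemma bval_eq (n : ℕ) (β : Fin n → ℤ) {a : ℕ} (h : a < n) : bval n β a = β ⟨a, h⟩ :=
  dif_pos h

def tval (n : ℕ) (τ : Equiv.Perm (Fin (2 * n))) (a : ℕ) : ℕ :=
  if h : a < 2 * n then ((τ ⟨a, h⟩ : Fin (2 * n)) : ℕ) else 0

lemma tval_pos (n : ℕ) (τ : Equiv.Perm (Fin (2 * n))) {a : ℕ} (h : a < 2 * n) :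
    tval n τ a = ((τ ⟨a, h⟩ : Fin (2 * n)) : ℕ) := dif_pos h

lemma tval_lt (n : ℕ) (τ : Equiv.Perm (Fin (2 * n))) {a : ℕ} (h : a < 2 * n) :
    tval n τ a < 2 * n := by
  rw [tval_pos n τ h]; exact (τ _).isLt

lemma tval_inj (n : ℕ) (τ : Equiv.Perm (Fin (2 * n))) {a b : ℕ} (ha : a < 2 * n)
    (hb : b < 2 * n) (h : tval n τ a = tval n τ b) : a = b := by
  rw [tval_pos n τ ha, tval_pos n τ hb] at h
  have h2 : (⟨a, ha⟩ : Fin (2 * n)) = ⟨b, hb⟩ := τ.injective (Fin.ext h)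
  rw [Fin.mk.injEq] at h2
  exact h2

/-- val form of the mirror property. -/
lemma mirror_val {n : ℕ} {τ : Equiv.Perm (Fin (2 * n))} (hm : τ ∈ mirroredC n)
    {a b : Fin (2 * n)} (hab : (a : ℕ) + (b : ℕ) = 2 * n - 1) :
    ((τ a : Fin (2 * n)) : ℕ) + ((τ b : Fin (2 * n)) : ℕ) = 2 * n - 1 := by
  have ha := a.isLt
  have hb' : b = a.rev := Fin.ext (by rw [Fin.val_rev]; omega)
  subst hb'
  rw [hm a, Fin.val_rev]
  have := (τ a).isLt
  omega

lemma mirror_tval {n : ℕ} {τ : Equiv.Perm (Fin (2 * n))} (hm : τ ∈ mirroredC n)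
    {a b : ℕ} (ha : a < 2 * n) (hb : b < 2 * n) (hab : a + b = 2 * n - 1) :
    tval n τ a + tval n τ b = 2 * n - 1 := by
  rw [tval_pos n τ ha, tval_pos n τ hb]
  exact mirror_val hm (by rw [Fin.val_mk, Fin.val_mk]; exact hab)

def theta (n : ℕ) (τ : Equiv.Perm (Fin (2 * n))) : Fin n → ℤ :=
  fun j => encA n (tval n τ (n - 1 - (j : ℕ)))

lemma theta_mem {n : ℕ} {τ : Equiv.Perm (Fin (2 * n))} (hm : τ ∈ mirroredC n) :
    theta n τ ∈ SignedPerms n := by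
  constructor
  · intro i
    have hi := i.isLt
    exact encA_abs (tval_lt n τ (by omega))
  · intro a b hab
    have ha := a.isLt; have hb := b.isLt
    have hab' : |encA n (tval n τ (n - 1 - (a : ℕ)))|
        = |encA n (tval n τ (n - 1 - (b : ℕ)))| := hab
    rcases encA_abs_eq (tval_lt n τ (by omega)) (tval_lt n τ (by omega)) hab' with h | h
    · have := tval_inj n τ (by omega) (by omega) h
      exact Fin.ext (by omega)
    · exfalso
      have h2 := mirror_tval hm (a := n - 1 - (a : ℕ)) (b := n + (a : ℕ))
        (by omega) (by omega) (by omega)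
      have hl := tval_lt n τ (show n - 1 - (a : ℕ) < 2 * n by omega)
      have h3 : tval n τ (n - 1 - (b : ℕ)) = tval n τ (n + (a : ℕ)) := by omega
      have := tval_inj n τ (by omega) (by omega) h3
      omega

lemma theta_injOn {n : ℕ} (hn : 1 ≤ n) : Set.InjOn (theta n) (mirroredC n) := by
  intro τ hτ τ' hτ' h
  have key : ∀ a : ℕ, a < n → tval n τ a = tval n τ' a := by
    intro a ha
    have h2 : encA n (tval n τ (n - 1 - (n - 1 - a)))
        = encA n (tval n τ' (n - 1 - (n - 1 - a))) :=
      congrFun h ⟨n - 1 - a, by omega⟩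
    rw [show n - 1 - (n - 1 - a) = a by omega] at h2
    exact encA_inj h2
  have key2 : ∀ a : ℕ, a < 2 * n → tval n τ a = tval n τ' a := by
    intro a ha
    by_cases h1 : a < n
    · exact key a h1
    · have e1 := mirror_tval hτ (a := 2 * n - 1 - a) (b := a) (by omega) ha (by omega)
      have e2 := mirror_tval hτ' (a := 2 * n - 1 - a) (b := a) (by omega) ha (by omega)
      have e3 := key (2 * n - 1 - a) (by omega)
      omega
  apply Equiv.ext
  intro x
  apply Fin.ext
  have hx := x.isLt
  have := key2 (x : ℕ) hx
  rw [tval_pos n τ hx, tval_pos n τ' hx] at this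
  exact this

def gfun (n : ℕ) (β : Fin n → ℤ) (j : Fin (2 * n)) : Fin (2 * n) :=
  if (j : ℕ) < n then
    ⟨decN n (bval n β (n - 1 - (j : ℕ))), decN_lt (by have := j.isLt; omega) _⟩
  else
    Fin.rev ⟨decN n (bval n β (n - 1 - (2 * n - 1 - (j : ℕ)))),
      decN_lt (by have := j.isLt; omega) _⟩

lemma gfun_val {n : ℕ} (β : Fin n → ℤ) (j : Fin (2 * n)) :
    ((gfun n β j : Fin (2 * n)) : ℕ) =
      if (j : ℕ) < n then decN n (bval n β (n - 1 - (j : ℕ)))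
      else 2 * n - 1 - decN n (bval n β (n - 1 - (2 * n - 1 - (j : ℕ)))) := by
  have hj := j.isLt
  simp only [gfun]
  split_ifs with h
  · rw [Fin.val_mk]
  · rw [Fin.val_rev, Fin.val_mk]
    have := decN_lt (show 1 ≤ n by omega) (bval n β (n - 1 - (2 * n - 1 - (j : ℕ))))
    omega

lemma decN_bval_eq {n : ℕ} (hn : 1 ≤ n) {β : Fin n → ℤ} (hβ : β ∈ SignedPerms n)
    {a b : ℕ} (ha : a < n) (hb : b < n)
    (h : decN n (bval n β a) = decN n (bval n β b)) : a = b := by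
  obtain ⟨hbd, hinj⟩ := hβ
  rw [bval_eq n β ha, bval_eq n β hb] at h
  have e1 := encA_decN hn (hbd ⟨a, ha⟩).1 (hbd ⟨a, ha⟩).2
  have e2 := encA_decN hn (hbd ⟨b, hb⟩).1 (hbd ⟨b, hb⟩).2
  have h3 : β ⟨a, ha⟩ = β ⟨b, hb⟩ := by rw [← e1, ← e2, h]
  have h4 : (⟨a, ha⟩ : Fin n) = ⟨b, hb⟩ := hinj (congrArg abs h3)
  rw [Fin.mk.injEq] at h4
  exact h4

lemma decN_bval_add {n : ℕ} (hn : 1 ≤ n) {β : Fin n → ℤ} (hβ : β ∈ SignedPerms n)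
    {a b : ℕ} (ha : a < n) (hb : b < n)
    (h : decN n (bval n β a) + decN n (bval n β b) = 2 * n - 1) : False := by
  obtain ⟨hbd, hinj⟩ := hβ
  rw [bval_eq n β ha, bval_eq n β hb] at h
  have e1 := encA_decN hn (hbd ⟨a, ha⟩).1 (hbd ⟨a, ha⟩).2
  have e2 := encA_decN hn (hbd ⟨b, hb⟩).1 (hbd ⟨b, hb⟩).2
  have h3 : β ⟨a, ha⟩ = -β ⟨b, hb⟩ := by
    rw [← e1, ← e2]
    exact encA_neg (decN_lt hn _) (decN_lt hn _) h
  have h4 : (⟨a, ha⟩ : Fin n) = ⟨b, hb⟩ := hinj (by show |β ⟨a, ha⟩| = |β ⟨b, hb⟩|; rw [h3, abs_neg])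
  rw [h4] at h3
  have h5 := (hbd ⟨b, hb⟩).1
  rw [le_abs] at h5
  omega

lemma gfun_inj {n : ℕ} (hn : 1 ≤ n) {β : Fin n → ℤ} (hβ : β ∈ SignedPerms n) :
    Function.Injective (gfun n β) := by
  intro x y hxy
  have hx := x.isLt; have hy := y.isLt
  have hv := congrArg Fin.val hxy
  rw [gfun_val, gfun_val] at hv
  have d1 := decN_lt hn (bval n β (n - 1 - (x : ℕ)))
  have d2 := decN_lt hn (bval n β (n - 1 - (y : ℕ)))
  have d3 := decN_lt hn (bval n β (n - 1 - (2 * n - 1 - (x : ℕ))))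
  have d4 := decN_lt hn (bval n β (n - 1 - (2 * n - 1 - (y : ℕ))))
  apply Fin.ext
  split_ifs at hv with h1 h2 h2
  · have := decN_bval_eq hn hβ (show n - 1 - (x : ℕ) < n by omega)
      (show n - 1 - (y : ℕ) < n by omega) hv
    omega
  · exact (decN_bval_add hn hβ (show n - 1 - (x : ℕ) < n by omega)
      (show n - 1 - (2 * n - 1 - (y : ℕ)) < n by omega) (by omega)).elim
  · exact (decN_bval_add hn hβ (show n - 1 - (2 * n - 1 - (x : ℕ)) < n by omega)
      (show n - 1 - (y : ℕ) < n by omega) (by omega)).elim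
  · have := decN_bval_eq hn hβ (show n - 1 - (2 * n - 1 - (x : ℕ)) < n by omega)
      (show n - 1 - (2 * n - 1 - (y : ℕ)) < n by omega) (by omega)
    omega

lemma gfun_mirror {n : ℕ} (hn : 1 ≤ n) (β : Fin n → ℤ) (j : Fin (2 * n)) :
    gfun n β j.rev = (gfun n β j).rev := by
  have hj := j.isLt
  apply Fin.ext
  rw [gfun_val β j.rev, Fin.val_rev (gfun n β j), gfun_val β j, Fin.val_rev j]
  rw [show 2 * n - ((j : ℕ) + 1) = 2 * n - 1 - (j : ℕ) by omega]
  rw [show 2 * n - 1 - (2 * n - 1 - (j : ℕ)) = (j : ℕ) by omega]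
  have d1 := decN_lt hn (bval n β (n - 1 - (j : ℕ)))
  have d2 := decN_lt hn (bval n β (n - 1 - (2 * n - 1 - (j : ℕ))))
  split_ifs with h1 h2 h2 <;> omega

lemma theta_gfun {n : ℕ} (hn : 1 ≤ n) {β : Fin n → ℤ}
    (hb : Function.Bijective (gfun n β)) (hβ : β ∈ SignedPerms n) :
    theta n (Equiv.ofBijective _ hb) = β := by
  funext j
  have hj := j.isLt
  show encA n (tval n (Equiv.ofBijective _ hb) (n - 1 - (j : ℕ))) = β j
  rw [tval_pos n _ (show n - 1 - (j : ℕ) < 2 * n by omega)]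
  rw [Equiv.ofBijective_apply, gfun_val, Fin.val_mk]
  rw [if_pos (show n - 1 - (j : ℕ) < n by omega)]
  rw [show n - 1 - (n - 1 - (j : ℕ)) = (j : ℕ) by omega]
  rw [bval_eq n β hj]
  exact encA_decN hn (hβ.1 _).1 (hβ.1 _).2

lemma isPeakHat_iff {n : ℕ} (τ : Equiv.Perm (Fin (2 * n))) (i : ℕ) :
    IsPeakHat n τ i ↔ (1 < i ∧ i ≤ n) ∧
      (tval n τ (i - 2) < tval n τ (i - 1) ∧ tval n τ i < tval n τ (i - 1)) := by
  constructor
  · rintro ⟨h, h1, h2⟩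
    refine ⟨h, ?_, ?_⟩
    · rw [tval_pos n τ (show i - 2 < 2 * n by omega), tval_pos n τ (show i - 1 < 2 * n by omega)]
      exact h1
    · rw [tval_pos n τ (show i < 2 * n by omega), tval_pos n τ (show i - 1 < 2 * n by omega)]
      exact h2
  · rintro ⟨h, h1, h2⟩
    refine ⟨h, ?_, ?_⟩
    · rw [tval_pos n τ (show i - 2 < 2 * n by omega),
        tval_pos n τ (show i - 1 < 2 * n by omega)] at h1
      exact h1
    · rw [tval_pos n τ (show i < 2 * n by omega),
        tval_pos n τ (show i - 1 < 2 * n by omega)] at h2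
      exact h2

lemma isPeakB_iff {n : ℕ} (β : Fin n → ℤ) (j : ℕ) :
    IsPeakB n β j ↔ (1 ≤ j ∧ j < n) ∧
      ((if 2 ≤ j then bval n β (j - 2) else 0) < bval n β (j - 1) ∧
        bval n β j < bval n β (j - 1)) := by
  constructor
  · rintro ⟨h, h1, h2⟩
    refine ⟨h, ?_, ?_⟩
    · rw [bval_eq n β (show j - 1 < n by omega)]
      by_cases hj : 2 ≤ j
      · rw [if_pos hj, bval_eq n β (show j - 2 < n by omega)]
        rw [dif_pos hj] at h1
        exact h1
      · rw [if_neg hj]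
        rw [dif_neg hj] at h1
        exact h1
    · rw [bval_eq n β (show j < n by omega), bval_eq n β (show j - 1 < n by omega)]
      exact h2
  · rintro ⟨h, h1, h2⟩
    refine ⟨h, ?_, ?_⟩
    · by_cases hj : 2 ≤ j
      · rw [dif_pos hj]
        rw [if_pos hj, bval_eq n β (show j - 2 < n by omega),
          bval_eq n β (show j - 1 < n by omega)] at h1
        exact h1
      · rw [dif_neg hj]
        rw [if_neg hj, bval_eq n β (show j - 1 < n by omega)] at h1
        exact h1
    · rw [bval_eq n β (show j < n by omega), bval_eq n β (show j - 1 < n by omega)] at h2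
      exact h2

lemma peak_iff {n : ℕ} {τ : Equiv.Perm (Fin (2 * n))} (hm : τ ∈ mirroredC n)
    {j : ℕ} (hj1 : 1 ≤ j) (hj2 : j < n) :
    IsPeakB n (theta n τ) j ↔ IsPeakHat n τ (n + 1 - j) := by
  rw [isPeakB_iff, isPeakHat_iff]
  have hb : ∀ a : ℕ, a < n → bval n (theta n τ) a = encA n (tval n τ (n - 1 - a)) :=
    fun a ha => bval_eq n (theta n τ) ha
  have hmir : tval n τ n + tval n τ (n - 1) = 2 * n - 1 :=
    mirror_tval hm (by omega) (by omega) (by omega)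
  have t1 := tval_lt n τ (show n - 1 < 2 * n by omega)
  have t2 := tval_lt n τ (show n < 2 * n by omega)
  by_cases hj : 2 ≤ j
  · rw [if_pos hj, hb (j - 2) (by omega), hb (j - 1) (by omega), hb j (by omega)]
    rw [show n - 1 - (j - 2) = n + 1 - j by omega, show n - 1 - (j - 1) = n - j by omega,
      show n + 1 - j - 2 = n - 1 - j by omega, show n + 1 - j - 1 = n - j by omega]
    rw [encA_lt, encA_lt]
    constructor
    · rintro ⟨h, h1, h2⟩
      exact ⟨⟨by omega, by omega⟩, h2, h1⟩
    · rintro ⟨h, h1, h2⟩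
      exact ⟨⟨by omega, by omega⟩, h2, h1⟩
  · have hj1' : j = 1 := by omega
    subst hj1'
    rw [if_neg hj, hb 0 (by omega), hb 1 (by omega)]
    rw [show n + 1 - 1 = n by omega]
    rw [show n - 1 - 0 = n - 1 from rfl, show n - 1 - 1 = n - 2 by omega]
    rw [encA_pos, encA_lt]
    constructor
    · rintro ⟨h, h1, h2⟩
      exact ⟨⟨by omega, by omega⟩, h2, by omega⟩
    · rintro ⟨h, h1, h2⟩
      exact ⟨⟨by omega, by omega⟩, by omega, h1⟩

lemma mem_iff {n : ℕ} (hn : 1 ≤ n) {S : Finset ℕ} (hS : ∀ i ∈ S, 2 ≤ i ∧ i ≤ n)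
    {τ : Equiv.Perm (Fin (2 * n))} (hm : τ ∈ mirroredC n) :
    (∀ i : ℕ, IsPeakHat n τ i ↔ i ∈ S) ↔
      (∀ j : ℕ, IsPeakB n (theta n τ) j ↔ j ∈ S.image fun i => n - i + 1) := by
  constructor
  · intro h j
    by_cases hj : 1 ≤ j ∧ j < n
    · rw [peak_iff hm hj.1 hj.2, h (n + 1 - j)]
      simp only [Finset.mem_image]
      constructor
      · intro hi
        exact ⟨n + 1 - j, hi, by have := hS _ hi; omega⟩
      · rintro ⟨i, hi, rfl⟩
        have := hS i hi
        rw [show n + 1 - (n - i + 1) = i by omega]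
        exact hi
    · constructor
      · rintro ⟨h', -⟩
        exact (hj h').elim
      · intro hmem
        rw [Finset.mem_image] at hmem
        obtain ⟨i, hi, rfl⟩ := hmem
        have := hS i hi
        exact (hj (by omega)).elim
  · intro h i
    by_cases hi : 2 ≤ i ∧ i ≤ n
    · have this1 := peak_iff hm (j := n + 1 - i) (by omega) (by omega)
      rw [show n + 1 - (n + 1 - i) = i by omega] at this1
      rw [← this1, h (n + 1 - i)]
      simp only [Finset.mem_image]
      constructor
      · rintro ⟨i', hi', he⟩
        have hb' := hS i' hi'
        have : i' = i := by omega
        rwa [this] at hi'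
      · intro hii
        exact ⟨i, hii, by omega⟩
    · constructor
      · rintro ⟨h', -⟩
        exact (hi ⟨h'.1, h'.2⟩).elim
      · intro hmem
        exact ((hi (hS i hmem)).elim : _)

end Stmt10


theorem stmt10 (n : ℕ) (hn : 1 ≤ n) :
    ∃ θ : Equiv.Perm (Fin (2 * n)) → (Fin n → ℤ),
      Set.BijOn θ (mirroredC n) (SignedPerms n) ∧
      ∀ S : Finset ℕ, (∀ i ∈ S, 2 ≤ i ∧ i ≤ n) →
        Set.BijOn θ (hatPC n S) (hatPB n (S.image fun i => n - i + 1)) := by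
  have hmapsto : Set.MapsTo (Stmt10.theta n) (mirroredC n) (SignedPerms n) :=
    fun τ hτ => Stmt10.theta_mem hτ
  have hinj : Set.InjOn (Stmt10.theta n) (mirroredC n) := Stmt10.theta_injOn hn
  have hsurj : Set.SurjOn (Stmt10.theta n) (mirroredC n) (SignedPerms n) := by
    intro β hβ
    have hbij : Function.Bijective (Stmt10.gfun n β) :=
      Finite.injective_iff_bijective.mp (Stmt10.gfun_inj hn hβ)
    refine ⟨Equiv.ofBijective _ hbij, ?_, Stmt10.theta_gfun hn hbij hβ⟩
    intro j
    exact Stmt10.gfun_mirror hn β j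
  refine ⟨Stmt10.theta n, ⟨hmapsto, hinj, hsurj⟩, ?_⟩
  intro S hS
  have key : ∀ τ ∈ mirroredC n,
      (τ ∈ hatPC n S ↔ Stmt10.theta n τ ∈ hatPB n (S.image fun i => n - i + 1)) := by
    intro τ hτ
    constructor
    · rintro ⟨-, hp⟩
      exact ⟨Stmt10.theta_mem hτ, (Stmt10.mem_iff hn hS hτ).mp hp⟩
    · rintro ⟨-, hp⟩
      exact ⟨hτ, (Stmt10.mem_iff hn hS hτ).mpr hp⟩
  refine ⟨fun τ hτ => (key τ hτ.1).mp hτ, hinj.mono (fun τ hτ => hτ.1), ?_⟩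
  intro β hβ
  obtain ⟨τ, hτ, hθ⟩ := hsurj hβ.1
  exact ⟨τ, (key τ hτ).mpr (by rw [hθ]; exact hβ), hθ⟩
end

section
/- For every n ≥ 2 and every S ⊆ {1,…,n−1}, the number of type C_n mirrored permutations whose first n entries have peak set S equals 2^n times the number of permutations in S_n with peak set S: |P_C(S;n)| = 2^n · |P(S;n)|. Consequently, if p is a polynomial with |P(S;n)| = p(n)·2^{n−|S|−1}, then |P_C(S;n)| = p(n)·2^{2n−|S|−1}. -/
open Equiv

namespace S11

open Finset in
variable {n : ℕ}

def cle (c : Fin n) : Fin (2 * n) := ⟨c.1, by omega⟩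

lemma val_cle (c : Fin n) : ((cle c : Fin (2 * n)) : ℕ) = c := rfl

lemma cle_inj : Function.Injective (cle (n := n)) := by
  intro a b h
  have hv : ((cle a : Fin (2 * n)) : ℕ) = ((cle b : Fin (2 * n)) : ℕ) := congrArg Fin.val h
  rw [val_cle, val_cle] at hv
  exact Fin.ext hv

def chi (H : Finset (Fin n)) (c : Fin n) : Fin (2 * n) :=
  if c ∈ H then (cle c).rev else cle c

lemma chi_val_mem {H : Finset (Fin n)} {c : Fin n} (h : c ∈ H) :
    ((chi H c : Fin (2 * n)) : ℕ) = 2 * n - (c + 1) := by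
  simp [chi, h, Fin.val_rev, val_cle]

lemma chi_val_notMem {H : Finset (Fin n)} {c : Fin n} (h : c ∉ H) :
    ((chi H c : Fin (2 * n)) : ℕ) = c := by
  simp [chi, h, val_cle]

lemma chi_inj (H : Finset (Fin n)) : Function.Injective (chi H) := by
  intro a b h
  have ha := a.isLt; have hb := b.isLt
  have hv : ((chi H a : Fin (2 * n)) : ℕ) = ((chi H b : Fin (2 * n)) : ℕ) :=
    congrArg Fin.val h
  by_cases h1 : a ∈ H <;> by_cases h2 : b ∈ H
  · rw [chi_val_mem h1, chi_val_mem h2] at hv; exact Fin.ext (by omega)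
  · rw [chi_val_mem h1, chi_val_notMem h2] at hv; exact Fin.ext (by omega)
  · rw [chi_val_notMem h1, chi_val_mem h2] at hv; exact Fin.ext (by omega)
  · rw [chi_val_notMem h1, chi_val_notMem h2] at hv; exact Fin.ext (by omega)

def AA (H : Finset (Fin n)) : Finset (Fin (2 * n)) := Finset.univ.image (chi H)

lemma card_AA (H : Finset (Fin n)) : (AA H).card = n := by
  rw [AA, Finset.card_image_of_injective _ (chi_inj H), Finset.card_univ, Fintype.card_fin]

lemma mem_AA {H : Finset (Fin n)} {x : Fin (2 * n)} : x ∈ AA H ↔ ∃ c, chi H c = x := by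
  simp [AA]

lemma rev_notMem_AA {H : Finset (Fin n)} {x : Fin (2 * n)} (hx : x ∈ AA H) :
    x.rev ∉ AA H := by
  obtain ⟨c, rfl⟩ := mem_AA.1 hx
  intro hmem
  obtain ⟨c', hc'⟩ := mem_AA.1 hmem
  have hv : ((chi H c' : Fin (2 * n)) : ℕ) = ((chi H c).rev : ℕ) := congrArg Fin.val hc'
  rw [Fin.val_rev] at hv
  have hc1 := c.isLt; have hc2 := c'.isLt
  by_cases h1 : c ∈ H <;> by_cases h2 : c' ∈ H
  · rw [chi_val_mem h2, chi_val_mem h1] at hv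
    have : c' = c := Fin.ext (by omega)
    subst this; omega
  · rw [chi_val_notMem h2, chi_val_mem h1] at hv
    have : c' = c := Fin.ext (by omega)
    subst this; exact h2 h1
  · rw [chi_val_mem h2, chi_val_notMem h1] at hv
    have : c' = c := Fin.ext (by omega)
    subst this; exact h1 h2
  · rw [chi_val_notMem h2, chi_val_notMem h1] at hv
    omega

def gi (H : Finset (Fin n)) : Fin n ≃o {x // x ∈ AA H} := (AA H).orderIsoOfFin (card_AA H)

lemma gi_mem (H : Finset (Fin n)) (a : Fin n) : ((gi H a : {x // x ∈ AA H}) : Fin (2 * n)) ∈ AA H :=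
  (gi H a).2

lemma gi_lt (H : Finset (Fin n)) (a b : Fin n) :
    ((gi H a : {x // x ∈ AA H}) : Fin (2 * n)) < ((gi H b : {x // x ∈ AA H}) : Fin (2 * n)) ↔ a < b := by
  rw [Subtype.coe_lt_coe, (gi H).lt_iff_lt]

lemma gi_coe_inj {H : Finset (Fin n)} {a b : Fin n}
    (h : ((gi H a : {x // x ∈ AA H}) : Fin (2 * n)) = ((gi H b : {x // x ∈ AA H}) : Fin (2 * n))) :
    a = b :=
  (gi H).injective (Subtype.ext h)

def tf (π : Equiv.Perm (Fin n)) (H : Finset (Fin n)) : Fin (2 * n) → Fin (2 * n) :=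
  fun j =>
    if h : (j : ℕ) < n then ((gi H (π ⟨j, h⟩) : {x // x ∈ AA H}) : Fin (2 * n))
    else ((gi H (π ⟨2 * n - ((j : ℕ) + 1), by have := j.isLt; omega⟩) : {x // x ∈ AA H}) :
      Fin (2 * n)).rev

lemma tf_inj (π : Equiv.Perm (Fin n)) (H : Finset (Fin n)) : Function.Injective (tf π H) := by
  intro j1 j2 h
  unfold tf at h
  by_cases h1 : (j1 : ℕ) < n <;> by_cases h2 : (j2 : ℕ) < n
  · rw [dif_pos h1, dif_pos h2] at h
    have hmk := π.injective (gi_coe_inj h)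
    simp only [Fin.mk.injEq] at hmk
    exact Fin.ext hmk
  · rw [dif_pos h1, dif_neg h2] at h
    exact absurd (h ▸ gi_mem H _) (rev_notMem_AA (gi_mem H _))
  · rw [dif_neg h1, dif_pos h2] at h
    exact absurd (h ▸ gi_mem H _) (rev_notMem_AA (gi_mem H _))
  · rw [dif_neg h1, dif_neg h2] at h
    have h' := Fin.rev_injective h
    have hmk := π.injective (gi_coe_inj h')
    simp only [Fin.mk.injEq] at hmk
    have := j1.isLt; have := j2.isLt
    exact Fin.ext (by omega)

noncomputable def Fmap (π : Equiv.Perm (Fin n)) (H : Finset (Fin n)) : Equiv.Perm (Fin (2 * n)) :=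
  Equiv.ofBijective (tf π H) (Finite.injective_iff_bijective.1 (tf_inj π H))

lemma Fmap_apply (π : Equiv.Perm (Fin n)) (H : Finset (Fin n)) (j : Fin (2 * n)) :
    Fmap π H j = tf π H j := rfl

lemma Fmap_cle (π : Equiv.Perm (Fin n)) (H : Finset (Fin n)) (i : Fin n) :
    Fmap π H (cle i) = ((gi H (π i) : {x // x ∈ AA H}) : Fin (2 * n)) := by
  rw [Fmap_apply, tf, dif_pos (show ((cle i : Fin (2 * n)) : ℕ) < n from i.isLt)]
  congr

lemma Fmap_rev (π : Equiv.Perm (Fin n)) (H : Finset (Fin n)) (j : Fin (2 * n)) :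
    Fmap π H j.rev = (Fmap π H j).rev := by
  rw [Fmap_apply, Fmap_apply, tf, tf]
  have hj2 := j.isLt
  by_cases hj : (j : ℕ) < n
  · have hr : ¬ ((j.rev : ℕ) < n) := by rw [Fin.val_rev]; omega
    rw [dif_neg hr, dif_pos hj]
    exact congrArg (fun x : Fin n => ((gi H (π x) : {x // x ∈ AA H}) : Fin (2 * n)).rev)
      (Fin.ext (by simp only [Fin.val_rev]; omega))
  · have hr : (j.rev : ℕ) < n := by rw [Fin.val_rev]; omega
    rw [dif_pos hr, dif_neg hj, Fin.rev_rev]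
    exact congrArg (fun x : Fin n => ((gi H (π x) : {x // x ∈ AA H}) : Fin (2 * n)))
      (Fin.ext (by simp only [Fin.val_rev]))

lemma Fmap_mirrored (π : Equiv.Perm (Fin n)) (H : Finset (Fin n)) :
    Fmap π H ∈ mirroredC n := fun j => Fmap_rev π H j

lemma Fmap_lt (π : Equiv.Perm (Fin n)) (H : Finset (Fin n)) (a b : Fin n) :
    Fmap π H (cle a) < Fmap π H (cle b) ↔ π a < π b := by
  rw [Fmap_cle, Fmap_cle, gi_lt]

lemma peak_iff (π : Equiv.Perm (Fin n)) (H : Finset (Fin n)) (i : ℕ) :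
    IsPeakFirst n (Fmap π H) i ↔ IsPeak π i := by
  constructor
  · rintro ⟨⟨h1, h2⟩, ha, hb⟩
    refine ⟨⟨h1, h2⟩, ?_, ?_⟩
    · have := (Fmap_lt π H ⟨i - 2, by omega⟩ ⟨i - 1, by omega⟩).1 (by exact ha)
      exact this
    · have := (Fmap_lt π H ⟨i, by omega⟩ ⟨i - 1, by omega⟩).1 (by exact hb)
      exact this
  · rintro ⟨⟨h1, h2⟩, ha, hb⟩
    refine ⟨⟨h1, h2⟩, ?_, ?_⟩
    · exact (Fmap_lt π H ⟨i - 2, by omega⟩ ⟨i - 1, by omega⟩).2 ha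
    · exact (Fmap_lt π H ⟨i, by omega⟩ ⟨i - 1, by omega⟩).2 hb

lemma AA_eq_image (π : Equiv.Perm (Fin n)) (H : Finset (Fin n)) :
    AA H = Finset.univ.image (fun c => Fmap π H (cle c)) := by
  ext x
  simp only [Finset.mem_image, Finset.mem_univ, true_and, Fmap_cle]
  constructor
  · intro hx
    obtain ⟨a, ha⟩ := (gi H).surjective ⟨x, hx⟩
    exact ⟨π.symm a, by rw [Equiv.apply_symm_apply, ha]⟩
  · rintro ⟨c, rfl⟩
    exact gi_mem H _

lemma mem_H_iff (H : Finset (Fin n)) (c : Fin n) : c ∈ H ↔ (cle c).rev ∈ AA H := by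
  constructor
  · intro h
    exact mem_AA.2 ⟨c, by simp [chi, h]⟩
  · intro h
    obtain ⟨c', hc'⟩ := mem_AA.1 h
    have hv : ((chi H c' : Fin (2 * n)) : ℕ) = ((cle c).rev : ℕ) := congrArg Fin.val hc'
    rw [Fin.val_rev, val_cle] at hv
    have hc1 := c.isLt; have hc2 := c'.isLt
    by_cases h2 : c' ∈ H
    · rw [chi_val_mem h2] at hv
      have : c' = c := Fin.ext (by omega)
      exact this ▸ h2
    · rw [chi_val_notMem h2] at hv
      omega

lemma Fmap_injective :
    Function.Injective (fun p : Equiv.Perm (Fin n) × Finset (Fin n) => Fmap p.1 p.2) := by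
  rintro ⟨π, H⟩ ⟨π', H'⟩ h
  simp only at h
  have hA : AA H = AA H' := by
    rw [AA_eq_image π H, AA_eq_image π' H', h]
  have hH : H = H' := Finset.ext fun c => by rw [mem_H_iff H c, mem_H_iff H' c, hA]
  subst hH
  have hπ : π = π' := by
    apply Equiv.ext
    intro c
    have : Fmap π H (cle c) = Fmap π' H (cle c) := by rw [h]
    rw [Fmap_cle, Fmap_cle] at this
    exact gi_coe_inj this
  rw [hπ]

lemma PC_eq (S : Finset ℕ) :
    P_C n S = (fun p : Equiv.Perm (Fin n) × Finset (Fin n) => Fmap p.1 p.2) ''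
      ((peakSetEq n S) ×ˢ (Set.univ : Set (Finset (Fin n)))) := by
  ext τ
  constructor
  · rintro ⟨hmir, hpk⟩
    classical
    set A : Finset (Fin (2 * n)) := Finset.univ.image (fun c : Fin n => τ (cle c)) with hAdef
    have hτcle_inj : Function.Injective (fun c : Fin n => τ (cle c)) :=
      fun a b hab => cle_inj (τ.injective hab)
    have cardA : A.card = n := by
      rw [hAdef, Finset.card_image_of_injective _ hτcle_inj, Finset.card_univ, Fintype.card_fin]
    have hrevA : ∀ x ∈ A, x.rev ∉ A := by
      intro x hx hx'
      rw [hAdef, Finset.mem_image] at hx hx'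
      obtain ⟨c1, -, hc1⟩ := hx
      obtain ⟨c2, -, hc2⟩ := hx'
      have : τ (cle c2) = τ ((cle c1).rev) := by rw [hmir (cle c1), hc1, hc2]
      have := congrArg Fin.val (τ.injective this)
      rw [Fin.val_rev, val_cle, val_cle] at this
      have := c1.isLt; have := c2.isLt
      omega
    set H : Finset (Fin n) := Finset.univ.filter (fun c : Fin n => (cle c).rev ∈ A) with hHdef
    have hsub : AA H ⊆ A := by
      intro x hx
      obtain ⟨c, rfl⟩ := mem_AA.1 hx
      by_cases hc : c ∈ H
      · have hc' : (cle c).rev ∈ A := by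
          rw [hHdef] at hc
          exact (Finset.mem_filter.1 hc).2
        simpa [chi, hc] using hc'
      · -- need cle c ∈ A; pigeonhole on classes
        have hclA : cle c ∈ A := by
          set clf : Fin (2 * n) → Fin n := fun x =>
            if h : (x : ℕ) < n then ⟨x, h⟩
            else ⟨2 * n - ((x : ℕ) + 1), by have := x.isLt; omega⟩ with hclf
          have hinjOn : Set.InjOn clf A := by
            intro x hx y hy hxy
            have hx2 := x.isLt; have hy2 := y.isLt
            by_cases h1 : (x : ℕ) < n <;> by_cases h2 : (y : ℕ) < n <;>
              simp only [hclf, dif_pos, dif_neg, h1, h2] at hxy <;>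
              have hv := congrArg Fin.val hxy
            · exact Fin.ext hv
            · exfalso
              have : x = y.rev := Fin.ext (by rw [Fin.val_rev]; simpa using hv)
              exact hrevA y hy (this ▸ hx)
            · exfalso
              have : y = x.rev := Fin.ext (by rw [Fin.val_rev]; simp at hv; omega)
              exact hrevA x hx (this ▸ hy)
            · exact Fin.ext (by simp at hv; omega)
          have himg : Finset.image clf A = Finset.univ := by
            apply Finset.eq_univ_of_card
            rw [Finset.card_image_of_injOn hinjOn, cardA, Fintype.card_fin]
          have : c ∈ Finset.image clf A := himg ▸ Finset.mem_univ c
          obtain ⟨x, hxA, hxc⟩ := Finset.mem_image.1 this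
          by_cases h1 : (x : ℕ) < n
          · have : x = cle c := by
              simp only [hclf, dif_pos h1] at hxc
              exact Fin.ext (by rw [val_cle, ← congrArg Fin.val hxc])
            exact this ▸ hxA
          · exfalso
            simp only [hclf, dif_neg h1] at hxc
            have hx2 := x.isLt
            have : x = (cle c).rev := by
              apply Fin.ext
              rw [Fin.val_rev, val_cle]
              have := congrArg Fin.val hxc
              simp only at this
              omega
            have hrevmem : (cle c).rev ∈ A := this ▸ hxA
            apply hc
            rw [hHdef]
            exact Finset.mem_filter.2 ⟨Finset.mem_univ c, hrevmem⟩
        simpa [chi, hc] using hclA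
    have hAA : AA H = A := Finset.eq_of_subset_of_card_le hsub (by rw [cardA, card_AA])
    have hmem : ∀ c : Fin n, τ (cle c) ∈ AA H := fun c =>
      hAA ▸ (hAdef ▸ Finset.mem_image_of_mem _ (Finset.mem_univ c))
    set pfun : Fin n → Fin n := fun c => (gi H).symm ⟨τ (cle c), hmem c⟩ with hpfun
    have pinj : Function.Injective pfun := by
      intro a b hab
      have := (gi H).symm.injective hab
      have := congrArg Subtype.val this
      exact cle_inj (τ.injective this)
    set π : Equiv.Perm (Fin n) := Equiv.ofBijective pfun (Finite.injective_iff_bijective.1 pinj)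
      with hπdef
    have key : ∀ c : Fin n, Fmap π H (cle c) = τ (cle c) := by
      intro c
      rw [Fmap_cle]
      have : π c = pfun c := rfl
      rw [this, hpfun]
      simp only [OrderIso.apply_symm_apply]
    have hFτ : Fmap π H = τ := by
      apply Equiv.ext
      intro j
      by_cases hj : (j : ℕ) < n
      · have : j = cle ⟨j, hj⟩ := Fin.ext rfl
        rw [this, key]
      · have hj2 := j.isLt
        have hjr : ((j.rev : Fin (2 * n)) : ℕ) < n := by rw [Fin.val_rev]; omega
        have hje : j = (cle ⟨(j.rev : ℕ), hjr⟩).rev := by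
          apply Fin.ext
          rw [Fin.val_rev, val_cle, Fin.val_rev]
          omega
        rw [hje, Fmap_rev, hmir, key]
    refine ⟨(π, H), ⟨?_, trivial⟩, hFτ⟩
    intro i
    rw [← peak_iff π H i, hFτ]
    exact hpk i
  · rintro ⟨⟨π, H⟩, ⟨hπ, -⟩, rfl⟩
    exact ⟨Fmap_mirrored π H, fun i => (peak_iff π H i).trans (hπ i)⟩

end S11


theorem stmt11 (n : ℕ) (hn : 2 ≤ n) (S : Finset ℕ) (hS : ∀ x ∈ S, 0 < x ∧ x < n) :
    (P_C n S).ncard = 2 ^ n * (peakSetEq n S).ncard ∧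
    ∀ p : Polynomial ℚ,
      ((peakSetEq n S).ncard : ℚ) = p.eval (n : ℚ) * 2 ^ (n - S.card - 1) →
      ((P_C n S).ncard : ℚ) = p.eval (n : ℚ) * 2 ^ (2 * n - S.card - 1) := by
  have hmain : (P_C n S).ncard = 2 ^ n * (peakSetEq n S).ncard := by
    rw [S11.PC_eq, Set.ncard_image_of_injective _ S11.Fmap_injective]
    have h1 : ((peakSetEq n S) ×ˢ (Set.univ : Set (Finset (Fin n)))).ncard
        = Nat.card ((peakSetEq n S) ×ˢ (Set.univ : Set (Finset (Fin n))) : Set _) := rfl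
    rw [h1, Nat.card_congr (Equiv.Set.prod _ _), Nat.card_prod]
    have h2 : Nat.card (Set.univ : Set (Finset (Fin n))) = 2 ^ n := by
      rw [Nat.card_coe_set_eq, Set.ncard_univ, Nat.card_eq_fintype_card,
        Fintype.card_finset, Fintype.card_fin]
    have h3 : Nat.card (peakSetEq n S) = (peakSetEq n S).ncard := rfl
    rw [h2, h3, mul_comm]
  refine ⟨hmain, ?_⟩
  intro p hp
  have hScard : S.card ≤ n - 1 := by
    have hsub : S ⊆ Finset.Ioo 0 n := fun x hx => Finset.mem_Ioo.2 (hS x hx)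
    have := Finset.card_le_card hsub
    rwa [Nat.card_Ioo] at this
  have hexp : 2 * n - S.card - 1 = n + (n - S.card - 1) := by omega
  rw [hmain]
  push_cast
  rw [hp, hexp, pow_add]
  ring
end

section
/- For every n ≥ 2 and every S ⊆ {1,…,n−1}, the number of type D_n mirrored permutations whose first n entries have peak set S equals 2^{n−1} times the number of permutations in S_n with peak set S: |P_D(S;n)| = 2^{n−1} · |P(S;n)|. Consequently, if p is a polynomial with |P(S;n)| = p(n)·2^{n−|S|−1}, then |P_D(S;n)| = p(n)·2^{2n−|S|−2}. -/
open Equiv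



namespace Stmt12
variable {n : ℕ}

def small (n : ℕ) (k : Fin n) : Fin (2*n) := ⟨k, by have := k.2; omega⟩
def large (n : ℕ) (k : Fin n) : Fin (2*n) := ⟨2*n - 1 - k, by have := k.2; omega⟩
def cf (ε : Fin n → Bool) (k : Fin n) : Fin (2*n) := if ε k then large n k else small n k
def pairIdx (x : Fin (2*n)) : Fin n := ⟨min x (2*n-1-x), by have := x.2; omega⟩

lemma small_lt (k : Fin n) : (small n k : ℕ) < n := k.2
lemma large_ge (k : Fin n) : n ≤ (large n k : ℕ) := by have := k.2; simp [large]; omega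

lemma pairIdx_small (k : Fin n) : pairIdx (small n k) = k := by
  have := k.2; simp only [pairIdx, small]; ext; simp; omega
lemma pairIdx_large (k : Fin n) : pairIdx (large n k) = k := by
  have := k.2; simp only [pairIdx, large]; ext; simp; omega
lemma pairIdx_cf (ε : Fin n → Bool) (k : Fin n) : pairIdx (cf ε k) = k := by
  unfold cf; split <;> simp [pairIdx_small, pairIdx_large]

lemma cf_injective (ε : Fin n → Bool) : Function.Injective (cf ε) := by
  intro a b h
  have : pairIdx (cf ε a) = pairIdx (cf ε b) := by rw [h]
  rwa [pairIdx_cf, pairIdx_cf] at this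

lemma rev_small (k : Fin n) : (small n k).rev = large n k := by
  have := k.2; ext; simp [small, large, Fin.val_rev]; omega
lemma rev_large (k : Fin n) : (large n k).rev = small n k := by
  have := k.2; ext; simp [small, large, Fin.val_rev]; omega
lemma pairIdx_rev (x : Fin (2*n)) : pairIdx x.rev = pairIdx x := by
  have := x.2; simp only [pairIdx]; ext; simp [Fin.val_rev]; omega

lemma cf_cases (ε : Fin n → Bool) (x : Fin (2*n)) :
    cf ε (pairIdx x) = x ∨ cf ε (pairIdx x) = x.rev := by
  have hx := x.2
  by_cases h : (x : ℕ) < n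
  · have h1 : small n (pairIdx x) = x := by ext; simp [small, pairIdx]; omega
    have h2 : large n (pairIdx x) = x.rev := by ext; simp [large, pairIdx, Fin.val_rev]; omega
    unfold cf; split <;> simp [h1, h2]
  · have h1 : large n (pairIdx x) = x := by ext; simp [large, pairIdx]; omega
    have h2 : small n (pairIdx x) = x.rev := by ext; simp [small, pairIdx, Fin.val_rev]; omega
    unfold cf; split <;> simp [h1, h2]

def Aset (ε : Fin n → Bool) : Finset (Fin (2*n)) := Finset.univ.image (cf ε)

lemma Aset_card (ε : Fin n → Bool) : (Aset ε).card = n := by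
  rw [Aset, Finset.card_image_of_injective _ (cf_injective ε), Finset.card_univ, Fintype.card_fin]

lemma mem_Aset_iff (ε : Fin n → Bool) (x : Fin (2*n)) :
    x ∈ Aset ε ↔ cf ε (pairIdx x) = x := by
  constructor
  · rintro hx
    simp only [Aset, Finset.mem_image, Finset.mem_univ, true_and] at hx
    obtain ⟨k, hk⟩ := hx
    have : pairIdx x = k := by rw [← hk, pairIdx_cf]
    rw [this, hk]
  · intro h; simp only [Aset, Finset.mem_image, Finset.mem_univ, true_and]; exact ⟨_, h⟩

lemma rev_ne (x : Fin (2*n)) : x.rev ≠ x := by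
  intro h
  have := congrArg Fin.val h
  have hx := x.2
  simp [Fin.val_rev] at this; omega

lemma mem_Aset_rev (ε : Fin n → Bool) (x : Fin (2*n)) :
    x.rev ∈ Aset ε ↔ x ∉ Aset ε := by
  rw [mem_Aset_iff, mem_Aset_iff, pairIdx_rev]
  constructor
  · intro h h'
    rw [h'] at h
    exact rev_ne x h.symm
  · intro h
    rcases cf_cases ε x with h' | h'
    · exact absurd h' h
    · exact h'

def aMap (ε : Fin n → Bool) (v : Fin n) : Fin (2*n) :=
  ((Aset ε).orderIsoOfFin (Aset_card ε) v : Fin (2*n))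

lemma aMap_strictMono (ε : Fin n → Bool) : StrictMono (aMap ε) := by
  intro a b h
  exact ((Aset ε).orderIsoOfFin (Aset_card ε)).strictMono h

lemma aMap_lt_iff (ε : Fin n → Bool) {a b : Fin n} : aMap ε a < aMap ε b ↔ a < b :=
  (aMap_strictMono ε).lt_iff_lt

lemma aMap_mem (ε : Fin n → Bool) (v : Fin n) : aMap ε v ∈ Aset ε :=
  ((Aset ε).orderIsoOfFin (Aset_card ε) v).2

lemma aMap_surj (ε : Fin n → Bool) {x : Fin (2*n)} (hx : x ∈ Aset ε) :
    ∃ v, aMap ε v = x := by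
  exact ⟨((Aset ε).orderIsoOfFin (Aset_card ε)).symm ⟨x, hx⟩, by
    simp [aMap]⟩

def Fmap (π : Perm (Fin n)) (ε : Fin n → Bool) : Fin (2*n) → Fin (2*n) :=
  fun j => if h : (j : ℕ) < n then aMap ε (π ⟨j, h⟩)
    else (aMap ε (π ⟨2*n - 1 - j, by have := j.2; omega⟩)).rev

lemma Fmap_injective (π : Perm (Fin n)) (ε : Fin n → Bool) :
    Function.Injective (Fmap π ε) := by
  intro a b h
  unfold Fmap at h
  split at h <;> split at h
  · have := (aMap_strictMono ε).injective h
    have := π.injective this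
    exact Fin.ext (by simpa [Fin.ext_iff] using this)
  · exfalso
    have h1 := aMap_mem ε (π ⟨a, by assumption⟩)
    rw [h] at h1
    rw [mem_Aset_rev] at h1
    exact h1 (aMap_mem ε _)
  · exfalso
    have h1 := aMap_mem ε (π ⟨b, by assumption⟩)
    rw [← h] at h1
    rw [mem_Aset_rev] at h1
    exact h1 (aMap_mem ε _)
  · have := Fin.rev_injective h
    have := π.injective ((aMap_strictMono ε).injective this)
    have := congrArg Fin.val this
    simp only at this
    have ha := a.2; have hb := b.2
    exact Fin.ext (by omega)

noncomputable def FPerm (π : Perm (Fin n)) (ε : Fin n → Bool) : Perm (Fin (2*n)) :=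
  Equiv.ofBijective (Fmap π ε) (Finite.injective_iff_bijective.mp (Fmap_injective π ε))

lemma FPerm_apply (π : Perm (Fin n)) (ε : Fin n → Bool) (j : Fin (2*n)) :
    FPerm π ε j = Fmap π ε j := rfl

lemma FPerm_apply_lt (π : Perm (Fin n)) (ε : Fin n → Bool) (j : Fin (2*n)) (h : (j:ℕ) < n) :
    FPerm π ε j = aMap ε (π ⟨j, h⟩) := by
  rw [FPerm_apply, Fmap, dif_pos h]

lemma FPerm_mirror (π : Perm (Fin n)) (ε : Fin n → Bool) (j : Fin (2*n)) :
    FPerm π ε j.rev = (FPerm π ε j).rev := by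
  have hj := j.2
  simp only [FPerm_apply, Fmap]
  by_cases h : (j : ℕ) < n
  · rw [dif_pos h, dif_neg (by simp [Fin.val_rev]; omega)]
    suffices hsuf : (⟨2*n - 1 - ((j.rev : Fin (2*n)) : ℕ), by have hr : (j.rev : ℕ) = 2*n - ((j:ℕ)+1) := j.val_rev; omega⟩ : Fin n)
        = ⟨(j : ℕ), h⟩ by rw [hsuf]
    exact Fin.ext (by simp [Fin.val_rev]; omega)
  · rw [dif_neg h, dif_pos (by simp [Fin.val_rev]; omega), Fin.rev_rev]
    suffices hsuf : (⟨((j.rev : Fin (2*n)) : ℕ), by have hr : (j.rev : ℕ) = 2*n - ((j:ℕ)+1) := j.val_rev; omega⟩ : Fin n)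
        = ⟨2*n - 1 - (j : ℕ), by have := j.2; omega⟩ by rw [hsuf]
    exact Fin.ext (by simp [Fin.val_rev]; omega)


lemma cf_ge_iff (ε : Fin n → Bool) (k : Fin n) : n ≤ (cf ε k : ℕ) ↔ ε k = true := by
  unfold cf
  split <;> rename_i h
  · simpa [h] using large_ge k
  · simp [h]; exact small_lt k

lemma large_mem_Aset (ε : Fin n → Bool) (k : Fin n) : large n k ∈ Aset ε ↔ ε k = true := by
  rw [mem_Aset_iff, pairIdx_large]
  unfold cf
  split <;> rename_i h
  · simp [h]
  · simp [h]
    intro hcon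
    have := congrArg Fin.val hcon
    have hk := k.2
    simp [small, large] at this
    omega

lemma FPerm_lt_iff (π : Perm (Fin n)) (ε : Fin n → Bool) (a b : ℕ) (ha : a < n) (hb : b < n) :
    FPerm π ε ⟨a, by omega⟩ < FPerm π ε ⟨b, by omega⟩ ↔ π ⟨a, ha⟩ < π ⟨b, hb⟩ := by
  rw [FPerm_apply_lt π ε ⟨a, by omega⟩ (show a < n from ha),
      FPerm_apply_lt π ε ⟨b, by omega⟩ (show b < n from hb)]
  exact aMap_lt_iff ε

lemma peak_iff (π : Perm (Fin n)) (ε : Fin n → Bool) (i : ℕ) :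
    IsPeakFirst n (FPerm π ε) i ↔ IsPeak π i := by
  constructor
  · rintro ⟨⟨h1, h2⟩, ha, hb⟩
    exact ⟨⟨h1, h2⟩, (FPerm_lt_iff π ε (i-2) (i-1) (by omega) (by omega)).mp ha,
      (FPerm_lt_iff π ε i (i-1) (by omega) (by omega)).mp hb⟩
  · rintro ⟨⟨h1, h2⟩, ha, hb⟩
    exact ⟨⟨h1, h2⟩, (FPerm_lt_iff π ε (i-2) (i-1) (by omega) (by omega)).mpr ha,
      (FPerm_lt_iff π ε i (i-1) (by omega) (by omega)).mpr hb⟩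

lemma card_filter_FPerm (π : Perm (Fin n)) (ε : Fin n → Bool) :
    (Finset.univ.filter fun j : Fin (2*n) => (j : ℕ) < n ∧ n ≤ ((FPerm π ε j : Fin (2*n)) : ℕ)).card
      = (Finset.univ.filter fun k => ε k = true).card := by
  apply Finset.card_bij (fun j _ => pairIdx ((FPerm π ε) j))
  · intro j hj
    simp only [Finset.mem_filter, Finset.mem_univ, true_and] at hj ⊢
    obtain ⟨hj1, hj2⟩ := hj
    rw [FPerm_apply_lt _ _ _ hj1] at hj2 ⊢
    have hmem := aMap_mem ε (π ⟨(j : ℕ), hj1⟩)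
    rw [mem_Aset_iff] at hmem
    rw [← cf_ge_iff ε, hmem]
    exact hj2
  · intro j1 hj1 j2 hj2 heq
    simp only [Finset.mem_filter, Finset.mem_univ, true_and] at hj1 hj2
    have m1 := aMap_mem ε (π ⟨(j1 : ℕ), hj1.1⟩)
    have m2 := aMap_mem ε (π ⟨(j2 : ℕ), hj2.1⟩)
    rw [mem_Aset_iff] at m1 m2
    rw [FPerm_apply_lt _ _ _ hj1.1, FPerm_apply_lt _ _ _ hj2.1] at heq
    have : aMap ε (π ⟨(j1 : ℕ), hj1.1⟩) = aMap ε (π ⟨(j2 : ℕ), hj2.1⟩) := by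
      rw [← m1, ← m2, heq]
    have := π.injective ((aMap_strictMono ε).injective this)
    exact Fin.ext (by simpa [Fin.ext_iff] using this)
  · intro k hk
    simp only [Finset.mem_filter, Finset.mem_univ, true_and] at hk
    have hmem : large n k ∈ Aset ε := (large_mem_Aset ε k).mpr hk
    obtain ⟨v, hv⟩ := aMap_surj ε hmem
    refine ⟨⟨(π.symm v : ℕ), by have := (π.symm v).2; omega⟩, ?_, ?_⟩
    · simp only [Finset.mem_filter, Finset.mem_univ, true_and]
      have h1 : ((π.symm v : Fin n) : ℕ) < n := (π.symm v).2
      refine ⟨h1, ?_⟩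
      rw [FPerm_apply_lt _ _ _ h1]
      have : (⟨((π.symm v : Fin n) : ℕ), h1⟩ : Fin n) = π.symm v := Fin.ext rfl
      rw [this, Equiv.apply_symm_apply, hv]
      exact large_ge k
    · have h1 : ((π.symm v : Fin n) : ℕ) < n := (π.symm v).2
      rw [FPerm_apply_lt _ _ _ h1]
      have : (⟨((π.symm v : Fin n) : ℕ), h1⟩ : Fin n) = π.symm v := Fin.ext rfl
      rw [this, Equiv.apply_symm_apply, hv, pairIdx_large]

lemma Aset_eq_image (π : Perm (Fin n)) (ε : Fin n → Bool) :
    Aset ε = Finset.univ.image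
      (fun i : Fin n => FPerm π ε (⟨(i : ℕ), by have := i.2; omega⟩ : Fin (2*n))) := by
  ext x
  simp only [Finset.mem_image, Finset.mem_univ, true_and]
  constructor
  · intro hx
    obtain ⟨v, hv⟩ := aMap_surj ε hx
    refine ⟨π.symm v, ?_⟩
    have h1 : ((π.symm v : Fin n) : ℕ) < n := (π.symm v).2
    rw [FPerm_apply_lt _ _ _ h1]
    have : (⟨((π.symm v : Fin n) : ℕ), h1⟩ : Fin n) = π.symm v := Fin.ext rfl
    rw [this, Equiv.apply_symm_apply, hv]
  · rintro ⟨i, rfl⟩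
    have h1 : (i : ℕ) < n := i.2
    rw [FPerm_apply_lt _ _ _ h1]
    exact aMap_mem ε _

lemma FPerm_pair_inj (π1 π2 : Perm (Fin n)) (ε1 ε2 : Fin n → Bool)
    (h : FPerm π1 ε1 = FPerm π2 ε2) : π1 = π2 ∧ ε1 = ε2 := by
  have hA : Aset ε1 = Aset ε2 := by
    rw [Aset_eq_image π1 ε1, Aset_eq_image π2 ε2, h]
  have hε : ε1 = ε2 := by
    funext k
    have hmem : (ε1 k = true) ↔ (ε2 k = true) := by
      rw [← large_mem_Aset ε1 k, hA, large_mem_Aset]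
    rcases Bool.dichotomy (ε1 k) with h1 | h1 <;>
      rcases Bool.dichotomy (ε2 k) with h2 | h2 <;> simp_all
  subst hε
  refine ⟨?_, rfl⟩
  apply Equiv.ext
  intro i
  have h1 : (i : ℕ) < n := i.2
  have := congrFun (congrArg (fun (e : Perm (Fin (2*n))) => (e : Fin (2*n) → Fin (2*n))) h)
    (⟨(i : ℕ), by omega⟩ : Fin (2*n))
  simp only [FPerm_apply_lt _ _ _ (show ((⟨(i:ℕ), by omega⟩ : Fin (2*n)) : ℕ) < n from h1)] at this
  have := (aMap_strictMono ε1).injective this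
  have he : (⟨(i : ℕ), h1⟩ : Fin n) = i := Fin.ext rfl
  rwa [he] at this

def EvenSet (n : ℕ) : Finset (Fin n → Bool) :=
  Finset.univ.filter fun ε => Even ((Finset.univ.filter fun k => ε k = true).card)

lemma evenSet_card (hn : 1 ≤ n) : (EvenSet n).card = 2 ^ (n - 1) := by
  classical
  set z : Fin n := ⟨0, by omega⟩ with hz
  set flip : (Fin n → Bool) → (Fin n → Bool) := fun ε => Function.update ε z (!ε z) with hflip
  have hT : ∀ ε : Fin n → Bool,
      (Finset.univ.filter fun k => flip ε k = true) =
        if ε z = true then (Finset.univ.filter fun k => ε k = true).erase z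
        else insert z (Finset.univ.filter fun k => ε k = true) := by
    intro ε
    ext k
    by_cases hk : k = z
    · rw [hk]
      rcases Bool.dichotomy (ε z) with h | h <;> simp [hflip, Function.update_self, h]
    · rcases Bool.dichotomy (ε z) with h | h <;>
        simp [hflip, Function.update_of_ne hk, h, hk]
  have hpar : ∀ ε : Fin n → Bool,
      Even ((Finset.univ.filter fun k => flip ε k = true).card) ↔
        ¬ Even ((Finset.univ.filter fun k => ε k = true).card) := by
    intro ε
    rw [hT]
    rcases Bool.dichotomy (ε z) with h | h
    · rw [if_neg (by simp [h])]
      rw [Finset.card_insert_of_notMem (by simp [h])]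
      simp only [Nat.even_iff]
      omega
    · rw [if_pos h]
      have hzmem : z ∈ Finset.univ.filter fun k => ε k = true := by simp [h]
      rw [Finset.card_erase_of_mem hzmem]
      have hc : 1 ≤ (Finset.univ.filter fun k => ε k = true).card :=
        Finset.card_pos.mpr ⟨z, hzmem⟩
      simp only [Nat.even_iff]
      omega
  have hinv : ∀ ε, flip (flip ε) = ε := by
    intro ε
    funext k
    by_cases hk : k = z
    · subst hk; simp [hflip, Function.update_self]
    · simp [hflip, Function.update_of_ne hk]
  have hbij : (EvenSet n).card =
      (Finset.univ.filter fun ε : Fin n → Bool =>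
        ¬ Even ((Finset.univ.filter fun k => ε k = true).card)).card := by
    apply Finset.card_bij' (fun ε _ => flip ε) (fun ε _ => flip ε)
    · intro ε hε
      simp only [EvenSet, Finset.mem_filter, Finset.mem_univ, true_and] at hε ⊢
      rw [hpar]
      first
        | exact hε
        | exact not_not_intro hε
    · intro ε hε
      simp only [EvenSet, Finset.mem_filter, Finset.mem_univ, true_and] at hε ⊢
      rw [hpar]
      first
        | exact hε
        | exact not_not_intro hε
    · intro ε _
      exact hinv ε
    · intro ε _
      exact hinv ε
  have hsplit : (EvenSet n).card +
      (Finset.univ.filter fun ε : Fin n → Bool =>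
        ¬ Even ((Finset.univ.filter fun k => ε k = true).card)).card
      = 2 ^ n := by
    rw [EvenSet, Finset.card_filter_add_card_filter_not, Finset.card_univ]
    simp [Fintype.card_fun]
  clear hinv hpar hT hflip flip hz z
  generalize hE : (EvenSet n).card = E at hbij hsplit
  generalize hO : (Finset.univ.filter fun ε : Fin n → Bool =>
        ¬ Even ((Finset.univ.filter fun k => ε k = true).card)).card = O at hbij hsplit
  have hpow : 2 ^ n = 2 ^ (n - 1) * 2 := by
    obtain ⟨m, hm⟩ : ∃ m, n = m + 1 := ⟨n - 1, (Nat.succ_pred_eq_of_pos hn).symm⟩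
    rw [hm]
    simp [pow_succ]
  rw [hpow, ← hbij, ← two_mul, mul_comm (2 ^ (n-1)) 2] at hsplit
  exact Nat.eq_of_mul_eq_mul_left (by norm_num) hsplit

lemma orderIsoOfFin_congr {n : ℕ} {A B : Finset (Fin (2*n))} (h : A = B)
    (hA : A.card = n) (hB : B.card = n) (v : Fin n) :
    (A.orderIsoOfFin hA v : Fin (2*n)) = (B.orderIsoOfFin hB v : Fin (2*n)) := by
  subst h; rfl

lemma FPerm_mem_PD (S : Finset ℕ) (π : Perm (Fin n)) (ε : Fin n → Bool)
    (hπ : π ∈ peakSetEq n S) (hε : Even ((Finset.univ.filter fun k => ε k = true).card)) :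
    FPerm π ε ∈ P_D n S := by
  refine ⟨⟨FPerm_mirror π ε, ?_⟩, fun i => (peak_iff π ε i).trans (hπ i)⟩
  rw [card_filter_FPerm]
  exact hε

lemma exists_preimage (S : Finset ℕ) (τ : Perm (Fin (2*n))) (hτ : τ ∈ P_D n S) :
    ∃ π ε, π ∈ peakSetEq n S ∧
      Even ((Finset.univ.filter fun k => ε k = true).card) ∧ FPerm π ε = τ := by
  classical
  obtain ⟨⟨hmir, hparity⟩, hpeak⟩ := hτ
  set emb : Fin n → Fin (2*n) := fun i => ⟨(i : ℕ), by have := i.2; omega⟩ with hemb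
  have hembinj : Function.Injective emb := fun a b h =>
    Fin.ext (by simpa [hemb, Fin.ext_iff] using h)
  set Aτ : Finset (Fin (2*n)) := Finset.univ.image (fun i => τ (emb i)) with hAτ
  have hAcard : Aτ.card = n := by
    have hinj : Function.Injective (fun i => τ (emb i)) := fun a b hab =>
      hembinj (τ.injective hab)
    rw [hAτ, Finset.card_image_of_injective _ hinj, Finset.card_univ, Fintype.card_fin]
  have hkey : ∀ x : Fin (2*n), x ∈ Aτ ↔ ((τ.symm x : Fin (2*n)) : ℕ) < n := by
    intro x
    constructor
    · intro hx
      simp only [hAτ, Finset.mem_image, Finset.mem_univ, true_and] at hx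
      obtain ⟨i, rfl⟩ := hx
      rw [Equiv.symm_apply_apply]
      exact i.2
    · intro h
      simp only [hAτ, Finset.mem_image, Finset.mem_univ, true_and]
      refine ⟨⟨((τ.symm x : Fin (2*n)) : ℕ), h⟩, ?_⟩
      have : emb ⟨((τ.symm x : Fin (2*n)) : ℕ), h⟩ = τ.symm x := Fin.ext rfl
      rw [this, Equiv.apply_symm_apply]
  have hsymm_rev : ∀ x : Fin (2*n), τ.symm x.rev = (τ.symm x).rev := by
    intro x
    apply τ.injective
    rw [Equiv.apply_symm_apply, hmir, Equiv.apply_symm_apply]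
  have hflip : ∀ x : Fin (2*n), x.rev ∈ Aτ ↔ x ∉ Aτ := by
    intro x
    rw [hkey, hkey, hsymm_rev]
    have h1 := (τ.symm x).2
    simp only [Fin.val_rev]
    omega
  set ε : Fin n → Bool := fun k => decide (large n k ∈ Aτ) with hε
  have hAset : Aset ε = Aτ := by
    apply Finset.eq_of_subset_of_card_le
    · intro x hx
      rw [mem_Aset_iff] at hx
      rw [← hx]
      unfold cf
      split <;> rename_i h
      · rw [hε] at h
        simpa using of_decide_eq_true h
      · rw [hε] at h
        have hnot : large n (pairIdx x) ∉ Aτ := by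
          intro hcon
          simp [hcon] at h
        rw [← rev_large (pairIdx x)]
        rw [hflip]
        exact hnot
    · rw [hAcard, Aset_card]
  set iso := Aτ.orderIsoOfFin hAcard with hiso
  have hmemA : ∀ i : Fin n, τ (emb i) ∈ Aτ := by
    intro i
    simp only [hAτ, Finset.mem_image, Finset.mem_univ, true_and]
    exact ⟨i, rfl⟩
  set g : Fin n → Fin n := fun i => iso.symm ⟨τ (emb i), hmemA i⟩ with hg
  have hginj : Function.Injective g := by
    intro a b hab
    have h1 : (⟨τ (emb a), hmemA a⟩ : {x // x ∈ Aτ}) = ⟨τ (emb b), hmemA b⟩ :=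
      iso.symm.injective hab
    have h2 : τ (emb a) = τ (emb b) := congrArg Subtype.val h1
    exact hembinj (τ.injective h2)
  set π : Perm (Fin n) := Equiv.ofBijective g (Finite.injective_iff_bijective.mp hginj) with hπ
  have hπapp : ∀ i : Fin n, π i = g i := fun _ => rfl
  have haMapg : ∀ i : Fin n, aMap ε (g i) = τ (emb i) := by
    intro i
    have h1 : aMap ε (g i) = ((iso (g i) : {x // x ∈ Aτ}) : Fin (2*n)) :=
      orderIsoOfFin_congr hAset (Aset_card ε) hAcard (g i)
    rw [h1]
    simp only [hg, OrderIso.apply_symm_apply]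
  have hF : FPerm π ε = τ := by
    apply Equiv.ext
    intro j
    rw [FPerm_apply, Fmap]
    split <;> rename_i h
    · rw [hπapp, haMapg]
    · rw [hπapp, haMapg]
      have hrev : (emb ⟨2*n - 1 - (j : ℕ), by have := j.2; omega⟩).rev = j := by
        apply Fin.ext
        have := j.2
        simp [hemb, Fin.val_rev]
        omega
      conv_rhs => rw [← hrev]
      rw [hmir]
  refine ⟨π, ε, ?_, ?_, hF⟩
  · intro i
    exact ((peak_iff π ε i).symm.trans (by rw [hF]; exact hpeak i))
  · rw [← card_filter_FPerm π ε]
    have h2 := hparity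
    rw [← hF] at h2
    exact h2

end Stmt12

theorem stmt12 (n : ℕ) (hn : 2 ≤ n) (S : Finset ℕ) (hS : ∀ x ∈ S, 0 < x ∧ x < n) :
    (P_D n S).ncard = 2 ^ (n - 1) * (peakSetEq n S).ncard ∧
    ∀ p : Polynomial ℚ,
      ((peakSetEq n S).ncard : ℚ) = p.eval (n : ℚ) * 2 ^ (n - S.card - 1) →
      ((P_D n S).ncard : ℚ) = p.eval (n : ℚ) * 2 ^ (2 * n - S.card - 2) := by
  classical
  have hprod : ∀ (s : Set (Perm (Fin n))) (t : Set (Fin n → Bool)),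
      (s ×ˢ t).ncard = s.ncard * t.ncard := by
    intro s t
    rw [← Nat.card_coe_set_eq, ← Nat.card_coe_set_eq, ← Nat.card_coe_set_eq,
      Nat.card_congr (Equiv.Set.prod s t), Nat.card_prod]
  set T : Set (Fin n → Bool) :=
    {ε | Even ((Finset.univ.filter fun k => ε k = true).card)} with hT
  have hTcard : T.ncard = 2 ^ (n - 1) := by
    have hTc : T = (↑(Stmt12.EvenSet n) : Set (Fin n → Bool)) := by
      ext ε
      simp [hT, Stmt12.EvenSet]
    rw [hTc, Set.ncard_coe_finset, Stmt12.evenSet_card (by omega)]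
  have hinj : Function.Injective
      (fun q : Perm (Fin n) × (Fin n → Bool) => Stmt12.FPerm q.1 q.2) := by
    intro a b hab
    obtain ⟨h1, h2⟩ := Stmt12.FPerm_pair_inj _ _ _ _ hab
    exact Prod.ext h1 h2
  have himg : P_D n S =
      (fun q : Perm (Fin n) × (Fin n → Bool) => Stmt12.FPerm q.1 q.2) ''
        ((peakSetEq n S) ×ˢ T) := by
    ext τ
    constructor
    · intro hτ
      obtain ⟨π, ε, h1, h2, h3⟩ := Stmt12.exists_preimage S τ hτ
      exact ⟨(π, ε), ⟨h1, h2⟩, h3⟩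
    · rintro ⟨⟨π, ε⟩, ⟨h1, h2⟩, rfl⟩
      exact Stmt12.FPerm_mem_PD S π ε h1 h2
  have key : (P_D n S).ncard = 2 ^ (n - 1) * (peakSetEq n S).ncard := by
    rw [himg, Set.ncard_image_of_injective _ hinj, hprod, hTcard, mul_comm]
  refine ⟨key, ?_⟩
  intro p hp
  have hScard : S.card ≤ n - 1 := by
    have hsub : S ⊆ Finset.Ioo 0 n := by
      intro x hx
      simp [Finset.mem_Ioo]
      exact ⟨(hS x hx).1, (hS x hx).2⟩
    calc S.card ≤ (Finset.Ioo 0 n).card := Finset.card_le_card hsub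
    _ = n - 1 := by rw [Nat.card_Ioo]; omega
  rw [key]
  push_cast
  rw [hp]
  have hpow : ((2 : ℚ)) ^ (n - 1) * 2 ^ (n - S.card - 1) = 2 ^ (2 * n - S.card - 2) := by
    rw [← pow_add]
    congr 1
    omega
  rw [mul_comm ((2:ℚ) ^ (n-1)), mul_assoc, mul_comm ((2:ℚ) ^ (n - S.card - 1)), hpow]
end

section
/- Let S ⊆ {1,…,n−1}, let 1 ≤ k ≤ n, and let π ∈ P(S;n)^{↗k} (so π has peak set S, π_{n−1} < π_n, and π_n = k). Then exactly Φ(n,k) of the elements τ ∈ 𝒞_n(π) satisfy τ_n ≤ n, and exactly Ψ(n,k) of the elements τ ∈ 𝒞_n(π) satisfy τ_n > n. -/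
open Equiv

theorem Equiv.Perm.apply_inv_self {α : Type*} (f : Equiv.Perm α) (x : α) : f (f⁻¹ x) = x :=
  f.apply_symm_apply x

theorem Equiv.Perm.inv_apply_self {α : Type*} (f : Equiv.Perm α) (x : α) : f⁻¹ (f x) = x :=
  f.symm_apply_apply x

namespace Stmt13Aux

open Finset

variable {n : ℕ}

/-- Embedding of the first half positions/values. -/
abbrev emb : Fin n → Fin (2 * n) := Fin.castLE (by omega)

lemma rev_val_lt (j : Fin (2 * n)) : ((j.rev : ℕ) < n) ↔ ¬ (j : ℕ) < n := by
  have := j.isLt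
  rw [Fin.val_rev]
  omega

/-- The set of small (0-based `< n`) values appearing in the first half of `τ`. -/
def Gmap (τ : Equiv.Perm (Fin (2 * n))) : Finset (Fin n) :=
  Finset.univ.filter fun v => ((τ⁻¹ (emb v) : ℕ) < n)

lemma mem_Gmap {τ : Equiv.Perm (Fin (2 * n))} {v : Fin n} :
    v ∈ Gmap τ ↔ ((τ⁻¹ (emb v) : ℕ) < n) := by
  simp [Gmap]

lemma inv_mirror {τ : Equiv.Perm (Fin (2 * n))} (h : ∀ j, τ j.rev = (τ j).rev) :
    ∀ w, τ⁻¹ w.rev = (τ⁻¹ w).rev := by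
  intro w
  apply τ.injective
  rw [Equiv.Perm.apply_inv_self, h, Equiv.Perm.apply_inv_self]

/-- The set of values in the first half of `τ`. -/
def Vset (τ : Equiv.Perm (Fin (2 * n))) : Finset (Fin (2 * n)) :=
  Finset.univ.filter fun w => ((τ⁻¹ w : ℕ) < n)

lemma mem_Vset {τ : Equiv.Perm (Fin (2 * n))} {w : Fin (2 * n)} :
    w ∈ Vset τ ↔ ((τ⁻¹ w : ℕ) < n) := by
  simp [Vset]

lemma Vset_eq (τ : Equiv.Perm (Fin (2 * n))) :
    Vset τ = Finset.univ.image (fun i : Fin n => τ (emb i)) := by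
  ext w
  simp only [mem_Vset, Finset.mem_image, Finset.mem_univ, true_and]
  constructor
  · intro h
    refine ⟨⟨(τ⁻¹ w : ℕ), h⟩, ?_⟩
    have he : emb (⟨(τ⁻¹ w : ℕ), h⟩ : Fin n) = τ⁻¹ w := Fin.ext rfl
    rw [he, Equiv.Perm.apply_inv_self]
  · rintro ⟨i, rfl⟩
    rw [Equiv.Perm.inv_apply_self]
    exact i.isLt

lemma Vset_card (τ : Equiv.Perm (Fin (2 * n))) : (Vset τ).card = n := by
  rw [Vset_eq, Finset.card_image_of_injective _
    (fun a b hab => Fin.castLE_injective _ (τ.injective hab))]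
  simp

lemma card_lt_perm (π : Equiv.Perm (Fin n)) (c : Fin n) :
    (Finset.univ.filter fun i => π i < c).card = (c : ℕ) := by
  have h1 : (Finset.univ.filter fun i => π i < c)
      = (Finset.univ.filter fun v => v < c).image π.symm := by
    ext i
    simp only [Finset.mem_filter, Finset.mem_univ, true_and, Finset.mem_image]
    constructor
    · intro h
      exact ⟨π i, h, π.symm_apply_apply i⟩
    · rintro ⟨v, hv, rfl⟩
      rwa [Equiv.apply_symm_apply]
  rw [h1, Finset.card_image_of_injective _ π.symm.injective]
  have h2 : (Finset.univ.filter fun v => v < c) = Finset.Iio c := by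
    ext v; simp
  rw [h2, Fin.card_Iio]

lemma bundle_inj (π : Equiv.Perm (Fin n)) : Set.InjOn Gmap (bundleC n π) := by
  intro τ hτ τ' hτ' hG
  have hm : ∀ j, τ j.rev = (τ j).rev := hτ.1
  have hm' : ∀ j, τ' j.rev = (τ' j).rev := hτ'.1
  have hcmp := hτ.2
  have hcmp' := hτ'.2
  -- the value sets agree
  have hV : Vset τ = Vset τ' := by
    ext w
    rw [mem_Vset, mem_Vset]
    rcases lt_or_ge (w : ℕ) n with hw | hw
    · have hwe : w = emb ⟨(w : ℕ), hw⟩ := Fin.ext rfl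
      rw [hwe]
      have := Finset.ext_iff.mp hG (⟨(w : ℕ), hw⟩ : Fin n)
      rw [mem_Gmap, mem_Gmap] at this
      exact this
    · have hwr : ((w.rev : ℕ)) < n := (rev_val_lt w).mpr (by omega)
      have hwe : w = (w.rev).rev := (Fin.rev_rev w).symm
      rw [hwe, inv_mirror hm, inv_mirror hm']
      rw [rev_val_lt, rev_val_lt]
      have hwe2 : w.rev = emb ⟨(w.rev : ℕ), hwr⟩ := Fin.ext rfl
      rw [hwe2]
      have := Finset.ext_iff.mp hG (⟨(w.rev : ℕ), hwr⟩ : Fin n)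
      rw [mem_Gmap, mem_Gmap] at this
      rw [this]
  -- first halves agree
  have key : ∀ i : Fin n, τ (emb i) = τ' (emb i) := by
    have hc : (Vset τ).card = n := Vset_card τ
    have h1 : (fun x : Fin n => τ (emb (π⁻¹ x))) = ⇑((Vset τ).orderEmbOfFin hc) := by
      apply Finset.orderEmbOfFin_unique hc
      · intro x
        rw [mem_Vset, Equiv.Perm.inv_apply_self]
        exact (π⁻¹ x).isLt
      · intro a b hab
        have h := hcmp (π⁻¹ a) (π⁻¹ b)
        rw [Equiv.Perm.apply_inv_self, Equiv.Perm.apply_inv_self] at h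
        exact h.mpr hab
    have h2 : (fun x : Fin n => τ' (emb (π⁻¹ x))) = ⇑((Vset τ).orderEmbOfFin hc) := by
      apply Finset.orderEmbOfFin_unique hc
      · intro x
        rw [hV, mem_Vset, Equiv.Perm.inv_apply_self]
        exact (π⁻¹ x).isLt
      · intro a b hab
        have h := hcmp' (π⁻¹ a) (π⁻¹ b)
        rw [Equiv.Perm.apply_inv_self, Equiv.Perm.apply_inv_self] at h
        exact h.mpr hab
    intro i
    have e1 := congrFun h1 (π i)
    have e2 := congrFun h2 (π i)
    rw [Equiv.Perm.inv_apply_self] at e1 e2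
    rw [e1, e2]
  apply Equiv.ext
  intro j
  rcases lt_or_ge (j : ℕ) n with hj | hj
  · have hje : j = emb ⟨(j : ℕ), hj⟩ := Fin.ext rfl
    rw [hje]; exact key _
  · have hjr : ((j.rev : ℕ)) < n := (rev_val_lt j).mpr (by omega)
    have hje : j = (j.rev).rev := (Fin.rev_rev j).symm
    rw [hje, hm j.rev, hm' j.rev]
    congr 1
    have hje2 : j.rev = emb ⟨(j.rev : ℕ), hjr⟩ := Fin.ext rfl
    rw [hje2]; exact key _

/-- The value set corresponding to a choice `B` of small values. -/
def Vof (B : Finset (Fin n)) : Finset (Fin (2 * n)) :=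
  B.image emb ∪ Bᶜ.image (fun b => (emb b).rev)

lemma emb_val (b : Fin n) : ((emb b : Fin (2 * n)) : ℕ) = (b : ℕ) := rfl

lemma emb_rev_val (b : Fin n) : (((emb b).rev : Fin (2 * n)) : ℕ) = 2 * n - ((b : ℕ) + 1) := by
  rw [Fin.val_rev, emb_val]

lemma Vof_card (B : Finset (Fin n)) : (Vof B).card = n := by
  have hdisj : Disjoint (B.image emb) (Bᶜ.image (fun b => (emb b).rev)) := by
    rw [Finset.disjoint_left]
    rintro w hw hw'
    simp only [Finset.mem_image] at hw hw'
    obtain ⟨a, _, rfl⟩ := hw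
    obtain ⟨b, _, hb⟩ := hw'
    have h1 := emb_rev_val b
    have h2 := emb_val a
    have := a.isLt
    have := b.isLt
    rw [hb] at h1
    omega
  rw [Vof, Finset.card_union_of_disjoint hdisj, Finset.card_image_of_injective _
      (Fin.castLE_injective _),
    Finset.card_image_of_injective _ (fun a b hab => by
      apply Fin.castLE_injective (show n ≤ 2 * n by omega)
      exact Fin.rev_inj.mp hab)]
  have hcc := Finset.card_add_card_compl B
  rw [Fintype.card_fin] at hcc
  omega

lemma emb_mem_Vof {B : Finset (Fin n)} {v : Fin n} : emb v ∈ Vof B ↔ v ∈ B := by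
  constructor
  · intro h
    rcases Finset.mem_union.mp h with h | h
    · obtain ⟨b, hb, he⟩ := Finset.mem_image.mp h
      rwa [Fin.castLE_injective _ he] at hb
    · obtain ⟨b, _, he⟩ := Finset.mem_image.mp h
      have h1 := emb_rev_val b
      have h2 := emb_val v
      have := v.isLt
      have := b.isLt
      rw [he] at h1
      omega
  · intro h
    exact Finset.mem_union_left _ (Finset.mem_image_of_mem _ h)

lemma Vof_rev {B : Finset (Fin n)} {w : Fin (2 * n)} (hw : w ∈ Vof B) : w.rev ∉ Vof B := by
  intro hr
  rcases Finset.mem_union.mp hw with h | h <;>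
    rcases Finset.mem_union.mp hr with h' | h'
  · obtain ⟨a, _, rfl⟩ := Finset.mem_image.mp h
    obtain ⟨b, _, hb⟩ := Finset.mem_image.mp h'
    have h1 : ((emb a).rev : ℕ) = (emb b : ℕ) := by rw [hb]
    rw [emb_rev_val, emb_val] at h1
    have := a.isLt; have := b.isLt
    omega
  · obtain ⟨a, ha, rfl⟩ := Finset.mem_image.mp h
    obtain ⟨b, hb, hb'⟩ := Finset.mem_image.mp h'
    have : a = b := by
      apply Fin.castLE_injective (show n ≤ 2 * n by omega)
      exact Fin.rev_inj.mp hb'.symm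
    subst this
    exact (Finset.mem_compl.mp hb) ha
  · obtain ⟨a, ha, rfl⟩ := Finset.mem_image.mp h
    obtain ⟨b, hb, hb'⟩ := Finset.mem_image.mp h'
    rw [Fin.rev_rev] at h'
    obtain ⟨c, hc, hc'⟩ := Finset.mem_image.mp h'
    have : c = a := by
      apply Fin.castLE_injective (show n ≤ 2 * n by omega)
      exact hc'
    subst this
    exact (Finset.mem_compl.mp ha) hc
  · obtain ⟨a, ha, rfl⟩ := Finset.mem_image.mp h
    obtain ⟨b, hb, hb'⟩ := Finset.mem_image.mp h'
    have h1 := congrArg (Fin.val (n := 2 * n)) hb'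
    rw [Fin.rev_rev, emb_rev_val, emb_val] at h1
    have := a.isLt
    have := b.isLt
    omega

def gB (B : Finset (Fin n)) : Fin n ↪o Fin (2 * n) := (Vof B).orderEmbOfFin (Vof_card B)

lemma gB_mem (B : Finset (Fin n)) (x : Fin n) : gB B x ∈ Vof B :=
  Finset.orderEmbOfFin_mem _ _ _

def ffun (π : Equiv.Perm (Fin n)) (B : Finset (Fin n)) (j : Fin (2 * n)) : Fin (2 * n) :=
  if h : (j : ℕ) < n then gB B (π ⟨(j : ℕ), h⟩)
  else (gB B (π ⟨((j.rev : Fin (2 * n)) : ℕ), by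
    have := j.isLt; rw [Fin.val_rev]; omega⟩)).rev

lemma ffun_inj (π : Equiv.Perm (Fin n)) (B : Finset (Fin n)) :
    Function.Injective (ffun π B) := by
  intro a b hab
  unfold ffun at hab
  split_ifs at hab with ha hb hb
  · have := π.injective ((gB B).injective hab)
    exact Fin.ext (congrArg (Fin.val (n := n)) this)
  · exact absurd (hab ▸ gB_mem B _) (Vof_rev (gB_mem B _))
  · exact absurd (hab.symm ▸ gB_mem B _) (Vof_rev (gB_mem B _))
  · have h1 := Fin.rev_inj.mpr hab
    rw [Fin.rev_rev, Fin.rev_rev] at h1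
    have := π.injective ((gB B).injective h1)
    have hval : ((a.rev : Fin (2 * n)) : ℕ) = ((b.rev : Fin (2 * n)) : ℕ) :=
      congrArg (Fin.val (n := n)) this
    rw [Fin.val_rev, Fin.val_rev] at hval
    have := a.isLt; have := b.isLt
    exact Fin.ext (by omega)

noncomputable def tauOf (π : Equiv.Perm (Fin n)) (B : Finset (Fin n)) : Equiv.Perm (Fin (2 * n)) :=
  Equiv.ofBijective _ (Finite.injective_iff_bijective.mp (ffun_inj π B))

lemma tauOf_apply (π : Equiv.Perm (Fin n)) (B : Finset (Fin n)) (j : Fin (2 * n)) :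
    tauOf π B j = ffun π B j := rfl

lemma tauOf_small (π : Equiv.Perm (Fin n)) (B : Finset (Fin n)) {j : Fin (2 * n)}
    (h : (j : ℕ) < n) : tauOf π B j = gB B (π ⟨(j : ℕ), h⟩) := by
  rw [tauOf_apply, ffun, dif_pos h]

lemma tauOf_emb (π : Equiv.Perm (Fin n)) (B : Finset (Fin n)) (i : Fin n) :
    tauOf π B (emb i) = gB B (π i) := by
  rw [tauOf_small π B (show ((emb i : Fin (2 * n)) : ℕ) < n from i.isLt)]
  congr 1

lemma tauOf_mirror (π : Equiv.Perm (Fin n)) (B : Finset (Fin n)) (j : Fin (2 * n)) :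
    tauOf π B j.rev = (tauOf π B j).rev := by
  rcases lt_or_ge (j : ℕ) n with hj | hj
  · have hjr : ¬ ((j.rev : Fin (2 * n)) : ℕ) < n := by
      rw [rev_val_lt]; omega
    rw [tauOf_apply, ffun, dif_neg hjr, tauOf_small π B hj]
    simp only [Fin.rev_rev]
  · have hjr : ((j.rev : Fin (2 * n)) : ℕ) < n := (rev_val_lt j).mpr (by omega)
    have hj' : ¬ (j : ℕ) < n := by omega
    rw [tauOf_small π B hjr, tauOf_apply, ffun, dif_neg hj', Fin.rev_rev]

lemma tauOf_mem_bundle (π : Equiv.Perm (Fin n)) (B : Finset (Fin n)) :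
    tauOf π B ∈ bundleC n π := by
  constructor
  · exact fun j => tauOf_mirror π B j
  · intro i j
    rw [show (Fin.castLE (by omega) i : Fin (2 * n)) = emb i from rfl,
      show (Fin.castLE (by omega) j : Fin (2 * n)) = emb j from rfl,
      tauOf_emb, tauOf_emb]
    exact (gB B).lt_iff_lt

lemma inv_tauOf_lt_iff (π : Equiv.Perm (Fin n)) (B : Finset (Fin n)) (w : Fin (2 * n)) :
    (((tauOf π B)⁻¹ w : Fin (2 * n)) : ℕ) < n ↔ w ∈ Vof B := by
  constructor
  · intro h
    have hw : w = tauOf π B ((tauOf π B)⁻¹ w) := (Equiv.Perm.apply_inv_self _ _).symm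
    rw [hw, tauOf_small π B h]
    exact gB_mem B _
  · intro h
    have : w ∈ Set.range ⇑(gB B) := by
      rw [gB, Finset.range_orderEmbOfFin]
      exact h
    obtain ⟨x, rfl⟩ := this
    have : tauOf π B (emb (π⁻¹ x)) = gB B x := by
      rw [tauOf_emb, Equiv.Perm.apply_inv_self]
    rw [← this, Equiv.Perm.inv_apply_self]
    exact (π⁻¹ x).isLt

lemma Gmap_tauOf (π : Equiv.Perm (Fin n)) (B : Finset (Fin n)) : Gmap (tauOf π B) = B := by
  ext v
  rw [mem_Gmap, inv_tauOf_lt_iff, emb_mem_Vof]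

lemma Gmap_card (τ : Equiv.Perm (Fin (2 * n))) :
    (Gmap τ).card = (Finset.univ.filter fun i : Fin n => ((τ (emb i) : Fin (2 * n)) : ℕ) < n).card := by
  have h2 : ((Vset τ).filter fun w : Fin (2 * n) => (w : ℕ) < n) = (Gmap τ).image emb := by
    ext w
    simp only [Finset.mem_filter, mem_Vset, Finset.mem_image, mem_Gmap]
    constructor
    · rintro ⟨h1, hw⟩
      exact ⟨⟨(w : ℕ), hw⟩, h1, Fin.ext rfl⟩
    · rintro ⟨v, hv, rfl⟩
      exact ⟨hv, v.isLt⟩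
  have h3 : ((Vset τ).filter fun w : Fin (2 * n) => (w : ℕ) < n)
      = (Finset.univ.filter fun i : Fin n => ((τ (emb i) : Fin (2 * n)) : ℕ) < n).image
          (fun i => τ (emb i)) := by
    ext w
    rw [Finset.mem_filter, mem_Vset]
    simp only [Finset.mem_image, Finset.mem_filter, Finset.mem_univ, true_and]
    constructor
    · rintro ⟨h1, hw⟩
      refine ⟨⟨((τ⁻¹ w : Fin (2 * n)) : ℕ), h1⟩, ?_, ?_⟩
      · show ((τ (τ⁻¹ w) : Fin (2 * n)) : ℕ) < n
        rw [Equiv.Perm.apply_inv_self]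
        exact hw
      · show τ (τ⁻¹ w) = w
        exact Equiv.Perm.apply_inv_self τ w
    · rintro ⟨i, hi, rfl⟩
      rw [Equiv.Perm.inv_apply_self]
      exact ⟨i.isLt, hi⟩
  have e1 := congrArg Finset.card h2
  rw [h3, Finset.card_image_of_injective _ (Fin.castLE_injective _),
    Finset.card_image_of_injective _
      (fun a b hab => Fin.castLE_injective _ (τ.injective hab))] at e1
  exact e1.symm

lemma rank_iff (π : Equiv.Perm (Fin n)) (hn : 0 < n) {τ : Equiv.Perm (Fin (2 * n))}
    (hτ : τ ∈ bundleC n π) :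
    (((τ (emb ⟨n - 1, by omega⟩) : Fin (2 * n)) : ℕ) < n) ↔
      ((π (⟨n - 1, by omega⟩ : Fin n) : ℕ) + 1 ≤ (Gmap τ).card) := by
  set last : Fin n := ⟨n - 1, by omega⟩ with hlast
  set w : Fin (2 * n) := τ (emb last) with hw
  set c : ℕ := (π last : ℕ) with hc
  have hcmp := hτ.2
  have hcmp' : ∀ i j : Fin n, τ (emb i) < τ (emb j) ↔ π i < π j := by
    intro i j; exact hτ.2 i j
  have hrank : (Finset.univ.filter fun i : Fin n => τ (emb i) < w).card = c := by
    have : (Finset.univ.filter fun i : Fin n => τ (emb i) < w)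
        = (Finset.univ.filter fun i : Fin n => π i < π last) := by
      apply Finset.filter_congr
      intro i _
      exact hcmp' i last
    rw [this, card_lt_perm]
  rw [Gmap_card]
  constructor
  · intro hsmall
    have hsub : insert last (Finset.univ.filter fun i : Fin n => τ (emb i) < w)
        ⊆ (Finset.univ.filter fun i : Fin n => ((τ (emb i) : Fin (2 * n)) : ℕ) < n) := by
      intro i hi
      rcases Finset.mem_insert.mp hi with rfl | hi
      · exact Finset.mem_filter.mpr ⟨Finset.mem_univ _, hsmall⟩
      · have := (Finset.mem_filter.mp hi).2
        rw [Fin.lt_def] at this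
        exact Finset.mem_filter.mpr ⟨Finset.mem_univ _, by omega⟩
    have hni : last ∉ (Finset.univ.filter fun i : Fin n => τ (emb i) < w) := by
      intro hmem
      have hlt := (Finset.mem_filter.mp hmem).2
      rw [hw] at hlt
      exact lt_irrefl _ hlt
    have := Finset.card_le_card hsub
    rw [Finset.card_insert_of_notMem hni, hrank] at this
    omega
  · intro hcard
    by_contra hsmall
    push_neg at hsmall
    have hsub : (Finset.univ.filter fun i : Fin n => ((τ (emb i) : Fin (2 * n)) : ℕ) < n)
        ⊆ (Finset.univ.filter fun i : Fin n => τ (emb i) < w) := by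
      intro i hi
      have h1 := (Finset.mem_filter.mp hi).2
      refine Finset.mem_filter.mpr ⟨Finset.mem_univ _, ?_⟩
      rw [Fin.lt_def]
      omega
    have := Finset.card_le_card hsub
    rw [hrank] at this
    omega

lemma count_ge (n k : ℕ) :
    (Finset.univ.filter fun B : Finset (Fin n) => k ≤ B.card).card = Phi n k := by
  rw [Phi]
  rw [Finset.card_eq_sum_card_fiberwise (f := Finset.card) (t := Finset.Icc k n)
    (fun B hB => by
      rw [Finset.mem_coe, Finset.mem_Icc]
      refine ⟨(Finset.mem_filter.mp hB).2, ?_⟩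
      calc B.card ≤ (Finset.univ : Finset (Fin n)).card := Finset.card_le_univ B
        _ = n := by simp)]
  apply Finset.sum_congr rfl
  intro i hi
  rw [Finset.mem_Icc] at hi
  have h1 : ((Finset.univ.filter fun B : Finset (Fin n) => k ≤ B.card).filter
      fun B => B.card = i) = Finset.univ.filter fun B : Finset (Fin n) => B.card = i := by
    ext B
    simp only [Finset.mem_filter, Finset.mem_univ, true_and]
    constructor
    · rintro ⟨_, h⟩; exact h
    · intro h; exact ⟨by omega, h⟩
  rw [h1]
  have h2 : (Finset.univ.filter fun B : Finset (Fin n) => B.card = i)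
      = Finset.powersetCard i (Finset.univ : Finset (Fin n)) := by
    rw [Finset.powersetCard_eq_filter, Finset.powerset_univ]
  rw [h2, Finset.card_powersetCard]
  simp

end Stmt13Aux

theorem stmt13 (n k : ℕ) (S : Finset ℕ) (hS : ∀ x ∈ S, 0 < x ∧ x < n)
    (hk : 1 ≤ k) (hkn : k ≤ n) (π : Equiv.Perm (Fin n)) (hπ : π ∈ ascTo n S k) :
    {τ ∈ bundleC n π | (τ ⟨n - 1, by omega⟩ : ℕ) < n}.ncard = Phi n k ∧
    {τ ∈ bundleC n π | n ≤ (τ ⟨n - 1, by omega⟩ : ℕ)}.ncard = Psi n k := by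
  classical
  obtain ⟨hpeak, hasc⟩ := hπ
  obtain ⟨hn2, hlt, hkval⟩ := hasc
  have hn : 0 < n := by omega
  open Stmt13Aux in
  -- setup
  have hfinidx : (⟨n - 1, by omega⟩ : Fin (2 * n)) = emb (⟨n - 1, by omega⟩ : Fin n) :=
    Fin.ext rfl
  set T1 : Set (Equiv.Perm (Fin (2 * n))) :=
    {τ ∈ bundleC n π | ((τ ⟨n - 1, by omega⟩ : Fin (2 * n)) : ℕ) < n} with hT1
  set T2 : Set (Equiv.Perm (Fin (2 * n))) :=
    {τ ∈ bundleC n π | n ≤ ((τ ⟨n - 1, by omega⟩ : Fin (2 * n)) : ℕ)} with hT2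
  have hrank : ∀ τ ∈ bundleC n π,
      (((τ (⟨n - 1, by omega⟩ : Fin (2 * n)) : Fin (2 * n)) : ℕ) < n ↔ k ≤ (Gmap τ).card) := by
    intro τ hτ
    rw [hfinidx]
    rw [Stmt13Aux.rank_iff π hn hτ]
    constructor
    · intro h
      have hk2 : (π (⟨n - 1, by omega⟩ : Fin n) : ℕ) + 1 = k := hkval
      omega
    · intro h
      have hk2 : (π (⟨n - 1, by omega⟩ : Fin n) : ℕ) + 1 = k := hkval
      omega
  have hinj : Set.InjOn Gmap (bundleC n π) := Stmt13Aux.bundle_inj π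
  -- first count
  have himg1 : Gmap '' T1 = ↑(Finset.univ.filter fun B : Finset (Fin n) => k ≤ B.card) := by
    ext B
    simp only [Set.mem_image, Finset.coe_filter, Set.mem_setOf_eq, Finset.mem_univ, true_and]
    constructor
    · rintro ⟨τ, ⟨hτb, hτs⟩, rfl⟩
      exact (hrank τ hτb).mp hτs
    · intro hB
      refine ⟨tauOf π B, ⟨tauOf_mem_bundle π B, ?_⟩, Gmap_tauOf π B⟩
      exact (hrank _ (tauOf_mem_bundle π B)).mpr (by rw [Gmap_tauOf]; exact hB)
  have hT1sub : T1 ⊆ bundleC n π := fun τ hτ => hτ.1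
  have hcount1 : T1.ncard = Phi n k := by
    have := Set.ncard_image_of_injOn (hinj.mono hT1sub)
    rw [himg1, Set.ncard_coe_finset, Stmt13Aux.count_ge] at this
    exact this.symm
  refine ⟨hcount1, ?_⟩
  -- total count
  have himgall : Gmap '' (bundleC n π) = Set.univ := by
    ext B
    simp only [Set.mem_image, Set.mem_univ, iff_true]
    exact ⟨tauOf π B, tauOf_mem_bundle π B, Gmap_tauOf π B⟩
  have htotal : (bundleC n π).ncard = 2 ^ n := by
    have := Set.ncard_image_of_injOn hinj
    rw [himgall, Set.ncard_univ, Nat.card_eq_fintype_card, Fintype.card_finset,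
      Fintype.card_fin] at this
    exact this.symm
  have hT2eq : T2 = bundleC n π \ T1 := by
    ext τ
    simp only [hT1, hT2, Set.mem_diff, Set.mem_setOf_eq]
    constructor
    · rintro ⟨hb, hs⟩
      exact ⟨hb, fun h => by omega⟩
    · rintro ⟨hb, hs⟩
      refine ⟨hb, ?_⟩
      by_contra h
      exact hs ⟨hb, by omega⟩
  rw [hT2eq, Set.ncard_diff hT1sub, htotal, hcount1]
  rfl
end

section
/- Let n ≥ 2 be even and S ⊆ {1,…,n−1}. Then |hat{P}_D(S;n)| = Σ_{k=1}^{n/2} (|P(S;n)^{↗2k−1}| + |P(S;n)^{↗2k}|)·Φ(n−1, 2k−1) + |underline{P(S;n)}|·2^{n−1}, and |hat{P}_D(S∪{n};n)| = Σ_{k=1}^{n/2} (|P(S;n)^{↗2k−1}| + |P(S;n)^{↗2k}|)·Ψ(n−1, 2k−1). -/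
open Equiv

open Finset
open scoped Classical

namespace S15

variable {n : ℕ}

lemma rev_val (v : Fin (2*n)) : (v.rev : ℕ) = 2*n-1-(v:ℕ) := by
  rw [Fin.val_rev]; omega

def valOf (hn : 0 < n) (A : Finset ℕ) (w : Fin n) : Fin (2*n) :=
  if (w:ℕ) ∈ A then ⟨2*n-1-(w:ℕ), by have := w.isLt; omega⟩
  else ⟨(w:ℕ), by have := w.isLt; omega⟩

lemma valOf_injective (hn : 0 < n) (A : Finset ℕ) : Function.Injective (valOf hn A) := by
  intro a b h
  have ha := a.isLt; have hb := b.isLt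
  unfold valOf at h
  split_ifs at h <;> rw [Fin.mk.injEq] at h <;> exact Fin.ext (by omega)

def Vset (hn : 0 < n) (A : Finset ℕ) : Finset (Fin (2*n)) := univ.image (valOf hn A)

lemma card_Vset (hn : 0 < n) (A : Finset ℕ) : (Vset hn A).card = n := by
  rw [Vset, card_image_of_injective _ (valOf_injective hn A), card_univ, Fintype.card_fin]

lemma mem_Vset_small (hn : 0 < n) {A : Finset ℕ} {v : Fin (2*n)} (hv : (v:ℕ) < n) :
    v ∈ Vset hn A ↔ (v:ℕ) ∉ A := by
  simp only [Vset, mem_image, mem_univ, true_and]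
  constructor
  · rintro ⟨w, hw⟩
    have hwlt := w.isLt
    unfold valOf at hw
    split_ifs at hw with h
    · have := congrArg Fin.val hw; simp at this; omega
    · have := congrArg Fin.val hw; simp at this; rwa [← this]
  · intro h
    refine ⟨⟨(v:ℕ), hv⟩, ?_⟩
    unfold valOf
    rw [if_neg h]

lemma mem_Vset_large (hn : 0 < n) {A : Finset ℕ} {v : Fin (2*n)} (hv : n ≤ (v:ℕ)) :
    v ∈ Vset hn A ↔ 2*n-1-(v:ℕ) ∈ A := by
  have hvlt := v.isLt
  simp only [Vset, mem_image, mem_univ, true_and]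
  constructor
  · rintro ⟨w, hw⟩
    have hwlt := w.isLt
    unfold valOf at hw
    split_ifs at hw with h
    · have := congrArg Fin.val hw; simp at this
      have : 2*n-1-(v:ℕ) = (w:ℕ) := by omega
      rw [this]; exact h
    · have := congrArg Fin.val hw; simp at this; omega
  · intro h
    refine ⟨⟨2*n-1-(v:ℕ), by omega⟩, ?_⟩
    unfold valOf
    rw [if_pos h]
    exact Fin.ext (by simp; omega)

lemma mem_Vset_rev (hn : 0 < n) {A : Finset ℕ} (v : Fin (2*n)) :
    v.rev ∈ Vset hn A ↔ v ∉ Vset hn A := by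
  have hv := v.isLt
  rcases lt_or_ge (v:ℕ) n with h | h
  · rw [mem_Vset_large hn (by rw [rev_val]; omega), mem_Vset_small hn h, rev_val]
    have h2 : 2*n-1-(2*n-1-(v:ℕ)) = (v:ℕ) := by omega
    rw [h2]; exact not_not.symm
  · rw [mem_Vset_small hn (by rw [rev_val]; omega), mem_Vset_large hn h, rev_val]

noncomputable def ordA (hn : 0 < n) (A : Finset ℕ) : Fin n ≃o {x // x ∈ Vset hn A} :=
  (Vset hn A).orderIsoOfFin (card_Vset hn A)

/-- the coercion of `ordA` to `Fin (2*n)` -/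
noncomputable def ordV (hn : 0 < n) (A : Finset ℕ) (r : Fin n) : Fin (2*n) :=
  (ordA hn A r : Fin (2*n))

lemma ordV_mem (hn : 0 < n) (A : Finset ℕ) (r : Fin n) :
    ordV hn A r ∈ Vset hn A := (ordA hn A r).2

lemma ordV_strictMono (hn : 0 < n) (A : Finset ℕ) : StrictMono (ordV hn A) :=
  fun _ _ h => (ordA hn A).strictMono h

lemma ordV_lt_iff (hn : 0 < n) (A : Finset ℕ) {r s : Fin n} :
    ordV hn A r < ordV hn A s ↔ r < s := (ordV_strictMono hn A).lt_iff_lt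

lemma ordV_injective (hn : 0 < n) (A : Finset ℕ) : Function.Injective (ordV hn A) :=
  (ordV_strictMono hn A).injective

lemma ordV_surj (hn : 0 < n) (A : Finset ℕ) {v : Fin (2*n)} (hv : v ∈ Vset hn A) :
    ∃ r, ordV hn A r = v :=
  ⟨(ordA hn A).symm ⟨v, hv⟩, by simp [ordV]⟩

lemma card_filter_memA (hn : 0 < n) {A : Finset ℕ} (hA : A ⊆ range n) :
    (univ.filter (fun w : Fin n => (w:ℕ) ∈ A)).card = A.card := by
  refine Finset.card_bij (fun w _ => (w:ℕ)) ?_ ?_ ?_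
  · intro w hw; exact (mem_filter.1 hw).2
  · intro a _ b _ h; exact Fin.ext h
  · intro a ha
    have : a < n := mem_range.1 (hA ha)
    exact ⟨⟨a, this⟩, mem_filter.2 ⟨mem_univ _, ha⟩, rfl⟩

lemma ordV_small_iff (hn : 0 < n) {A : Finset ℕ} (hA : A ⊆ range n) (r : Fin n) :
    ((ordV hn A r) : ℕ) < n ↔ (r:ℕ) < n - A.card := by
  classical
  set T : Finset (Fin n) :=
    univ.filter (fun s : Fin n => ((ordV hn A s) : ℕ) < n) with hT
  have hdc : ∀ r' s : Fin n, s ≤ r' → r' ∈ T → s ∈ T := by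
    intro r' s hle hr'
    simp only [hT, mem_filter, mem_univ, true_and] at hr' ⊢
    have h1 : ordV hn A s ≤ ordV hn A r' := (ordV_strictMono hn A).monotone hle
    exact lt_of_le_of_lt h1 hr'
  have h1 : T.image (ordV hn A)
      = (Vset hn A).filter (fun v : Fin (2*n) => (v:ℕ) < n) := by
    ext v
    simp only [mem_image, mem_filter, hT, mem_univ, true_and]
    constructor
    · rintro ⟨s, hs, rfl⟩; exact ⟨ordV_mem hn A s, hs⟩
    · rintro ⟨hv, hvn⟩
      obtain ⟨r', hr'⟩ := ordV_surj hn A hv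
      exact ⟨r', by rw [hr']; exact hvn, hr'⟩
  have h2 : (Vset hn A).filter (fun v : Fin (2*n) => (v:ℕ) < n)
      = (univ.filter (fun w : Fin n => (w:ℕ) ∉ A)).image (valOf hn A) := by
    ext v
    simp only [mem_filter, mem_image, mem_univ, true_and]
    constructor
    · rintro ⟨hv, hvn⟩
      have hnotA : (v:ℕ) ∉ A := (mem_Vset_small hn hvn).1 hv
      exact ⟨⟨(v:ℕ), hvn⟩, hnotA, by unfold valOf; rw [if_neg hnotA]⟩
    · rintro ⟨w, hw, rfl⟩
      have hwlt := w.isLt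
      have hval : valOf hn A w = ⟨(w:ℕ), by omega⟩ := by unfold valOf; rw [if_neg hw]
      rw [hval]
      refine ⟨?_, by simpa using hwlt⟩
      rw [mem_Vset_small hn (by simpa using hwlt)]
      simpa using hw
  have hcard : T.card = n - A.card := by
    have e1 : T.card = ((Vset hn A).filter (fun v : Fin (2*n) => (v:ℕ) < n)).card := by
      rw [← h1, card_image_of_injective _ (ordV_injective hn A)]
    have e2 : ((Vset hn A).filter (fun v : Fin (2*n) => (v:ℕ) < n)).card
        = (univ.filter (fun w : Fin n => (w:ℕ) ∉ A)).card := by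
      rw [h2, card_image_of_injective _ (valOf_injective hn A)]
    have e3 := Finset.card_filter_add_card_filter_not
        (s := (univ : Finset (Fin n))) (p := fun w : Fin n => (w:ℕ) ∈ A)
    rw [card_univ, Fintype.card_fin, card_filter_memA hn hA] at e3
    rw [e1, e2]
    have e4 : (univ.filter (fun w : Fin n => (w:ℕ) ∉ A)).card
        = (univ.filter (fun w : Fin n => ¬ (w:ℕ) ∈ A)).card := rfl
    omega
  have key : ∀ s : Fin n, s ∈ T ↔ (s:ℕ) < T.card := by
    intro s
    constructor
    · intro hs
      have hsub : Finset.Iic s ⊆ T := fun x hx => hdc s x (mem_Iic.1 hx) hs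
      have := Finset.card_le_card hsub
      rw [Fin.card_Iic] at this
      omega
    · intro hs
      by_contra hns
      have hsub : T ⊆ Finset.Iio s := by
        intro x hx
        rw [mem_Iio]
        by_contra hxs
        exact hns (hdc x s (le_of_not_gt hxs) hx)
      have := Finset.card_le_card hsub
      rw [Fin.card_Iio] at this
      omega
  have hk := key r
  simp only [hT, mem_filter, mem_univ, true_and] at hk
  rw [hk, hcard]

noncomputable def ffun (hn : 0 < n) (π : Equiv.Perm (Fin n)) (A : Finset ℕ) :
    Fin (2*n) → Fin (2*n) :=
  fun i =>
    if h : (i:ℕ) < n then ordV hn A (π ⟨(i:ℕ), h⟩)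
    else (ordV hn A (π ⟨2*n-1-(i:ℕ), by have := i.isLt; omega⟩)).rev

lemma ffun_small (hn : 0 < n) (π : Equiv.Perm (Fin n)) (A : Finset ℕ) (i : Fin (2*n))
    (h : (i:ℕ) < n) : ffun hn π A i = ordV hn A (π ⟨(i:ℕ), h⟩) := dif_pos h

lemma ffun_large (hn : 0 < n) (π : Equiv.Perm (Fin n)) (A : Finset ℕ) (i : Fin (2*n))
    (h : ¬ (i:ℕ) < n) :
    ffun hn π A i = (ordV hn A (π ⟨2*n-1-(i:ℕ), by have := i.isLt; omega⟩)).rev := dif_neg h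

lemma ffun_injective (hn : 0 < n) (π : Equiv.Perm (Fin n)) (A : Finset ℕ) :
    Function.Injective (ffun hn π A) := by
  intro a b h
  have ha := a.isLt; have hb := b.isLt
  by_cases h1 : (a:ℕ) < n <;> by_cases h2 : (b:ℕ) < n
  · rw [ffun_small hn π A a h1, ffun_small hn π A b h2] at h
    have := π.injective (ordV_injective hn A h)
    exact Fin.ext (by simpa [Fin.mk.injEq] using this)
  · rw [ffun_small hn π A a h1, ffun_large hn π A b h2] at h
    have hm := ordV_mem hn A (π ⟨(a:ℕ), h1⟩)
    rw [h, mem_Vset_rev hn] at hm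
    exact absurd (ordV_mem hn A _) hm
  · rw [ffun_large hn π A a h1, ffun_small hn π A b h2] at h
    have hm := ordV_mem hn A (π ⟨(b:ℕ), h2⟩)
    rw [← h, mem_Vset_rev hn] at hm
    exact absurd (ordV_mem hn A _) hm
  · rw [ffun_large hn π A a h1, ffun_large hn π A b h2] at h
    have h3 := Fin.rev_injective h
    have := π.injective (ordV_injective hn A h3)
    rw [Fin.mk.injEq] at this
    exact Fin.ext (by omega)

noncomputable def FP (hn : 0 < n) (π : Equiv.Perm (Fin n)) (A : Finset ℕ) :
    Equiv.Perm (Fin (2*n)) :=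
  Equiv.ofBijective _ (Finite.injective_iff_bijective.mp (ffun_injective hn π A))

lemma FP_apply (hn : 0 < n) (π : Equiv.Perm (Fin n)) (A : Finset ℕ) (i : Fin (2*n)) :
    FP hn π A i = ffun hn π A i := rfl

lemma FP_small (hn : 0 < n) (π : Equiv.Perm (Fin n)) (A : Finset ℕ) (i : Fin (2*n))
    (h : (i:ℕ) < n) : FP hn π A i = ordV hn A (π ⟨(i:ℕ), h⟩) := ffun_small hn π A i h

lemma FP_large (hn : 0 < n) (π : Equiv.Perm (Fin n)) (A : Finset ℕ) (i : Fin (2*n))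
    (h : ¬ (i:ℕ) < n) :
    FP hn π A i = (ordV hn A (π ⟨2*n-1-(i:ℕ), by have := i.isLt; omega⟩)).rev :=
  ffun_large hn π A i h

lemma FP_mirror (hn : 0 < n) (π : Equiv.Perm (Fin n)) (A : Finset ℕ) (j : Fin (2*n)) :
    FP hn π A j.rev = (FP hn π A j).rev := by
  have hj := j.isLt
  rcases lt_or_ge (j:ℕ) n with h | h
  · have h1 : ¬ ((j.rev : ℕ) < n) := by rw [rev_val]; omega
    rw [FP_large hn π A j.rev h1, FP_small hn π A j h]
    refine congrArg Fin.rev (congrArg (ordV hn A) (congrArg (⇑π) (Fin.ext ?_)))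
    show 2*n-1-((j.rev : Fin (2*n)):ℕ) = (j:ℕ)
    rw [rev_val]; omega
  · have h1 : (j.rev : ℕ) < n := by rw [rev_val]; omega
    rw [FP_small hn π A j.rev h1, FP_large hn π A j (by omega), Fin.rev_rev]
    refine congrArg (ordV hn A) (congrArg (⇑π) (Fin.ext ?_))
    show ((j.rev : Fin (2*n)):ℕ) = 2*n-1-(j:ℕ)
    rw [rev_val]

lemma FP_lt_FP (hn : 0 < n) (π : Equiv.Perm (Fin n)) (A : Finset ℕ) (i j : Fin (2*n))
    (hi : (i:ℕ) < n) (hj : (j:ℕ) < n) :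
    FP hn π A i < FP hn π A j ↔ π ⟨(i:ℕ), hi⟩ < π ⟨(j:ℕ), hj⟩ := by
  rw [FP_small hn π A i hi, FP_small hn π A j hj, ordV_lt_iff hn A]

lemma FP_mem_Vset_iff (hn : 0 < n) (π : Equiv.Perm (Fin n)) (A : Finset ℕ) (j : Fin (2*n)) :
    FP hn π A j ∈ Vset hn A ↔ (j:ℕ) < n := by
  rcases lt_or_ge (j:ℕ) n with h | h
  · simp only [h, iff_true]
    rw [FP_small hn π A j h]; exact ordV_mem hn A _
  · have h' : ¬ (j:ℕ) < n := by omega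
    simp only [h', iff_false]
    rw [FP_large hn π A j h', mem_Vset_rev hn]
    exact fun hc => hc (ordV_mem hn A _)

lemma card_pos_filter (hn : 0 < n) (π : Equiv.Perm (Fin n)) {A : Finset ℕ}
    (hA : A ⊆ range n) :
    (univ.filter fun j : Fin (2*n) => (j:ℕ) < n ∧ n ≤ ((FP hn π A j : Fin (2*n)) : ℕ)).card
      = A.card := by
  classical
  refine Finset.card_bij (fun j _ => 2*n-1-((FP hn π A j : Fin (2*n)):ℕ)) ?_ ?_ ?_
  · intro j hj
    rw [mem_filter] at hj
    obtain ⟨-, hj1, hj2⟩ := hj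
    have hmem : FP hn π A j ∈ Vset hn A := (FP_mem_Vset_iff hn π A j).2 hj1
    exact (mem_Vset_large hn hj2).1 hmem
  · intro a ha b hb h
    simp only [mem_filter] at ha hb
    have h1 := (FP hn π A a).isLt
    have h2 := (FP hn π A b).isLt
    have ha2 := ha.2.2
    have hb2 := hb.2.2
    exact (FP hn π A).injective (Fin.ext (by omega))
  · intro a ha
    have han : a < n := mem_range.1 (hA ha)
    set v : Fin (2*n) := ⟨2*n-1-a, by omega⟩ with hvdef
    have hvval : (v:ℕ) = 2*n-1-a := rfl
    have hv : v ∈ Vset hn A := by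
      rw [mem_Vset_large hn (by rw [hvval]; omega), hvval,
        show 2*n-1-(2*n-1-a) = a from by omega]
      exact ha
    obtain ⟨s, hs⟩ := ordV_surj hn A hv
    have hsn := (π.symm s).isLt
    set j0 : Fin (2*n) := ⟨((π.symm s : Fin n) : ℕ), by omega⟩ with hj0
    have hlt : (j0:ℕ) < n := hsn
    have hFP : FP hn π A j0 = v := by
      rw [FP_small hn π A j0 hlt]
      have he : (⟨(j0:ℕ), hlt⟩ : Fin n) = π.symm s := Fin.ext rfl
      rw [he, Equiv.apply_symm_apply, hs]
    refine ⟨j0, mem_filter.2 ⟨mem_univ _, hlt, ?_⟩, ?_⟩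
    · rw [hFP, hvval]; omega
    · rw [hFP, hvval]; omega

lemma ordV_eq_orderEmbOfFin (hn : 0 < n) (A : Finset ℕ) :
    ordV hn A = ⇑((Vset hn A).orderEmbOfFin (card_Vset hn A)) := by
  funext r
  exact Finset.coe_orderIsoOfFin_apply (Vset hn A) (card_Vset hn A) r

/-- the signed set extracted from a mirrored permutation -/
noncomputable def Aof (hn : 0 < n) (τ : Equiv.Perm (Fin (2*n))) : Finset ℕ :=
  (range n).filter (fun w =>
    n ≤ ((τ.symm ⟨w % (2*n), Nat.mod_lt _ (by omega)⟩ : Fin (2*n)) : ℕ))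

lemma Aof_subset (hn : 0 < n) (τ : Equiv.Perm (Fin (2*n))) : Aof hn τ ⊆ range n :=
  filter_subset _ _

lemma mem_Aof (hn : 0 < n) (τ : Equiv.Perm (Fin (2*n))) {w : ℕ} (hw : w < n) :
    w ∈ Aof hn τ ↔ n ≤ ((τ.symm ⟨w, by omega⟩ : Fin (2*n)) : ℕ) := by
  rw [Aof, mem_filter, mem_range]
  have he : (⟨w % (2*n), Nat.mod_lt _ (by omega : 0 < 2*n)⟩ : Fin (2*n))
      = ⟨w, by omega⟩ := Fin.ext (Nat.mod_eq_of_lt (by omega))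
  rw [he]
  simp [hw]

lemma mirror_symm {τ : Equiv.Perm (Fin (2*n))} (hmir : ∀ j, τ j.rev = (τ j).rev)
    (x : Fin (2*n)) : τ.symm x.rev = (τ.symm x).rev := by
  apply τ.injective
  rw [Equiv.apply_symm_apply, hmir, Equiv.apply_symm_apply]

lemma card_Aof (hn : 0 < n) {τ : Equiv.Perm (Fin (2*n))} (hmir : ∀ j, τ j.rev = (τ j).rev) :
    (univ.filter fun j : Fin (2*n) => (j:ℕ) < n ∧ n ≤ ((τ j : Fin (2*n)) : ℕ)).card
      = (Aof hn τ).card := by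
  classical
  refine Finset.card_bij (fun j _ => 2*n-1-((τ j : Fin (2*n)):ℕ)) ?_ ?_ ?_
  · intro j hj
    simp only [mem_filter] at hj
    obtain ⟨-, hj1, hj2⟩ := hj
    have hτlt := (τ j).isLt
    rw [mem_Aof hn τ (by omega)]
    have he : (⟨2*n-1-((τ j : Fin (2*n)):ℕ), by omega⟩ : Fin (2*n)) = (τ j).rev :=
      Fin.ext (by rw [rev_val])
    rw [he, mirror_symm hmir, Equiv.symm_apply_apply, rev_val]
    omega
  · intro a ha b hb h
    simp only [mem_filter] at ha hb
    have h1 := (τ a).isLt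
    have h2 := (τ b).isLt
    have ha2 := ha.2.2
    have hb2 := hb.2.2
    exact τ.injective (Fin.ext (by omega))
  · intro w hw
    have hwn : w < n := mem_range.1 (Aof_subset hn τ hw)
    rw [mem_Aof hn τ hwn] at hw
    have hslt := (τ.symm (⟨w, by omega⟩ : Fin (2*n))).isLt
    refine ⟨(τ.symm (⟨w, by omega⟩ : Fin (2*n))).rev, ?_, ?_⟩
    · simp only [mem_filter]
      refine ⟨mem_univ _, by rw [rev_val]; omega, ?_⟩
      have : τ (τ.symm (⟨w, by omega⟩ : Fin (2*n))).rev
          = (⟨w, by omega⟩ : Fin (2*n)).rev := by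
        rw [hmir, Equiv.apply_symm_apply]
      rw [this, rev_val]
      simp only [Fin.val_mk]
      omega
    · have : τ (τ.symm (⟨w, by omega⟩ : Fin (2*n))).rev
          = (⟨w, by omega⟩ : Fin (2*n)).rev := by
        rw [hmir, Equiv.apply_symm_apply]
      rw [this, rev_val]
      simp only [Fin.val_mk]
      omega

/-- pattern (rank) function of the first `n` entries -/
def pattFun (hn : 0 < n) (τ : Equiv.Perm (Fin (2*n))) : Fin n → Fin n := fun i =>
  ⟨(univ.filter fun j : Fin n =>
      τ (Fin.castLE (by omega) j) < τ (Fin.castLE (by omega) i)).card, by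
    have hsub : (univ.filter fun j : Fin n =>
        τ (Fin.castLE (by omega) j) < τ (Fin.castLE (by omega) i)) ⊆ univ.erase i := by
      intro j hj
      simp only [mem_filter] at hj
      rw [mem_erase]
      refine ⟨fun hji => ?_, mem_univ _⟩
      subst hji
      exact lt_irrefl _ hj.2
    have := Finset.card_le_card hsub
    have h2 : (univ.erase i).card = n - 1 := by
      rw [Finset.card_erase_of_mem (mem_univ _), card_univ, Fintype.card_fin]
    have := i.isLt
    omega⟩

lemma pattFun_lt_iff (hn : 0 < n) (τ : Equiv.Perm (Fin (2*n))) (i j : Fin n) :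
    pattFun hn τ i < pattFun hn τ j
      ↔ τ (Fin.castLE (by omega) i) < τ (Fin.castLE (by omega) j) := by
  have key : ∀ a b : Fin n,
      τ (Fin.castLE (by omega : n ≤ 2*n) a) < τ (Fin.castLE (by omega : n ≤ 2*n) b) →
      pattFun hn τ a < pattFun hn τ b := by
    intro a b hab
    have hsub : (univ.filter fun k : Fin n =>
        τ (Fin.castLE (by omega) k) < τ (Fin.castLE (by omega) a))
        ⊆ (univ.filter fun k : Fin n =>
        τ (Fin.castLE (by omega) k) < τ (Fin.castLE (by omega) b)) := by
      intro k hk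
      simp only [mem_filter] at hk ⊢
      exact ⟨mem_univ _, lt_trans hk.2 hab⟩
    have hmem : a ∈ (univ.filter fun k : Fin n =>
        τ (Fin.castLE (by omega) k) < τ (Fin.castLE (by omega) b)) := by
      simp only [mem_filter]; exact ⟨mem_univ _, hab⟩
    have hnmem : a ∉ (univ.filter fun k : Fin n =>
        τ (Fin.castLE (by omega) k) < τ (Fin.castLE (by omega) a)) := by
      simp only [mem_filter]
      rintro ⟨-, hc⟩
      exact lt_irrefl _ hc
    have : (univ.filter fun k : Fin n =>
        τ (Fin.castLE (by omega) k) < τ (Fin.castLE (by omega) a))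
        ⊂ (univ.filter fun k : Fin n =>
        τ (Fin.castLE (by omega) k) < τ (Fin.castLE (by omega) b)) :=
      ⟨hsub, fun hc => hnmem (hc hmem)⟩
    exact Finset.card_lt_card this
  constructor
  · intro h
    rcases lt_trichotomy (τ (Fin.castLE (by omega : n ≤ 2*n) i))
      (τ (Fin.castLE (by omega : n ≤ 2*n) j)) with hc | hc | hc
    · exact hc
    · exfalso
      have : Fin.castLE (by omega : n ≤ 2*n) i = Fin.castLE (by omega : n ≤ 2*n) j :=
        τ.injective hc
      have hij : i = j := Fin.ext (by
        have := congrArg Fin.val this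
        simpa using this)
      subst hij
      exact lt_irrefl _ h
    · exact absurd (key j i hc) (lt_asymm h)
  · exact key i j

lemma pattFun_injective (hn : 0 < n) (τ : Equiv.Perm (Fin (2*n))) :
    Function.Injective (pattFun hn τ) := by
  intro a b h
  by_contra hab
  rcases lt_trichotomy (τ (Fin.castLE (by omega : n ≤ 2*n) a))
    (τ (Fin.castLE (by omega : n ≤ 2*n) b)) with hc | hc | hc
  · have := (pattFun_lt_iff hn τ a b).2 hc
    rw [h] at this
    exact lt_irrefl _ this
  · exact hab (Fin.ext (by simpa using congrArg Fin.val (τ.injective hc)))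
  · have := (pattFun_lt_iff hn τ b a).2 hc
    rw [h] at this
    exact lt_irrefl _ this

noncomputable def pattP (hn : 0 < n) (τ : Equiv.Perm (Fin (2*n))) : Equiv.Perm (Fin n) :=
  Equiv.ofBijective _ (Finite.injective_iff_bijective.mp (pattFun_injective hn τ))

lemma pattP_apply (hn : 0 < n) (τ : Equiv.Perm (Fin (2*n))) (i : Fin n) :
    pattP hn τ i = pattFun hn τ i := rfl

lemma rank_perm (σ : Equiv.Perm (Fin n)) (i : Fin n) :
    (univ.filter fun j : Fin n => σ j < σ i).card = ((σ i : Fin n) : ℕ) := by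
  classical
  have h1 : (univ.filter fun j : Fin n => σ j < σ i).card
      = (univ.filter fun v : Fin n => v < σ i).card := by
    refine Finset.card_bij (fun j _ => σ j) ?_ ?_ ?_
    · intro j hj; simp only [mem_filter] at hj ⊢; exact ⟨mem_univ _, hj.2⟩
    · intro a _ b _ h; exact σ.injective h
    · intro v hv
      simp only [mem_filter] at hv
      refine ⟨σ.symm v, ?_, by simp⟩
      simp only [mem_filter, Equiv.apply_symm_apply]
      exact ⟨mem_univ _, hv.2⟩
  rw [h1]
  have h2 : (univ.filter fun v : Fin n => v < σ i) = Finset.Iio (σ i) := by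
    ext v; simp [Finset.mem_Iio]
  rw [h2, Fin.card_Iio]

lemma pattP_FP (hn : 0 < n) (π : Equiv.Perm (Fin n)) (A : Finset ℕ) :
    pattP hn (FP hn π A) = π := by
  apply Equiv.ext
  intro i
  rw [pattP_apply]
  apply Fin.ext
  show (univ.filter fun j : Fin n =>
      FP hn π A (Fin.castLE (by omega) j) < FP hn π A (Fin.castLE (by omega) i)).card
    = ((π i : Fin n) : ℕ)
  have he : ∀ j : Fin n, (univ.filter fun j' : Fin n =>
      FP hn π A (Fin.castLE (by omega) j') < FP hn π A (Fin.castLE (by omega) j))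
      = (univ.filter fun j' : Fin n => π j' < π j) := by
    intro j
    apply Finset.filter_congr
    intro k _
    rw [FP_lt_FP hn π A _ _ (by simp) (by simp)]
    constructor
    · intro h
      convert h using 2 <;> exact Fin.ext (by simp)
    · intro h
      convert h using 2 <;> exact Fin.ext (by simp)
  rw [he i, rank_perm]

lemma mem_Vset_Aof (hn : 0 < n) {τ : Equiv.Perm (Fin (2*n))}
    (hmir : ∀ j, τ j.rev = (τ j).rev) (v : Fin (2*n)) :
    v ∈ Vset hn (Aof hn τ) ↔ ((τ.symm v : Fin (2*n)) : ℕ) < n := by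
  have hvlt := v.isLt
  have hslt := (τ.symm v).isLt
  rcases lt_or_ge (v:ℕ) n with h | h
  · rw [mem_Vset_small hn h, mem_Aof hn τ h]
    have he : (⟨(v:ℕ), by omega⟩ : Fin (2*n)) = v := Fin.ext rfl
    rw [he]
    omega
  · rw [mem_Vset_large hn h, mem_Aof hn τ (by omega)]
    have he : (⟨2*n-1-(v:ℕ), by omega⟩ : Fin (2*n)) = v.rev := Fin.ext (by rw [rev_val])
    rw [he, mirror_symm hmir, rev_val]
    omega

lemma tau_eq_ordV (hn : 0 < n) {τ : Equiv.Perm (Fin (2*n))}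
    (hmir : ∀ j, τ j.rev = (τ j).rev) (i : Fin n) :
    τ (Fin.castLE (by omega) i) = ordV hn (Aof hn τ) (pattFun hn τ i) := by
  set f : Fin n → Fin (2*n) :=
    fun r => τ (Fin.castLE (by omega) ((pattP hn τ).symm r)) with hf
  have hfs : ∀ r, f r ∈ Vset hn (Aof hn τ) := by
    intro r
    rw [hf]
    rw [mem_Vset_Aof hn hmir, Equiv.symm_apply_apply]
    exact ((pattP hn τ).symm r).isLt
  have hmono : StrictMono f := by
    intro a b hab
    rw [hf]
    dsimp only
    rw [← pattFun_lt_iff hn τ]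
    have h1 : pattFun hn τ ((pattP hn τ).symm a) = pattP hn τ ((pattP hn τ).symm a) := rfl
    have h2 : pattFun hn τ ((pattP hn τ).symm b) = pattP hn τ ((pattP hn τ).symm b) := rfl
    rw [h1, h2, Equiv.apply_symm_apply, Equiv.apply_symm_apply]
    exact hab
  have huniq := Finset.orderEmbOfFin_unique
    (card_Vset hn (Aof hn τ)) hfs hmono
  have hval := congrFun huniq (pattP hn τ i)
  rw [hf] at hval
  dsimp only at hval
  rw [Equiv.symm_apply_apply] at hval
  rw [hval, ordV_eq_orderEmbOfFin hn]
  rfl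

set_option maxHeartbeats 1000000 in
lemma FP_reconstruct (hn : 0 < n) {τ : Equiv.Perm (Fin (2*n))}
    (hmir : ∀ j, τ j.rev = (τ j).rev) :
    FP hn (pattP hn τ) (Aof hn τ) = τ := by
  apply Equiv.ext
  intro j
  have hj := j.isLt
  rcases lt_or_ge (j:ℕ) n with h | h
  · rw [FP_small hn _ _ j h]
    have := tau_eq_ordV hn hmir ⟨(j:ℕ), h⟩
    rw [pattP_apply]
    rw [← this]
    congr 1
  · rw [FP_large hn _ _ j (by omega)]
    have := tau_eq_ordV hn hmir ⟨2*n-1-(j:ℕ), by omega⟩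
    rw [pattP_apply, ← this]
    have he : (Fin.castLE (by omega : n ≤ 2*n) (⟨2*n-1-(j:ℕ), by omega⟩ : Fin n))
        = j.rev := Fin.ext (by simp [rev_val]; omega)
    rw [he, hmir, Fin.rev_rev]

lemma Aof_FP (hn : 0 < n) (π : Equiv.Perm (Fin n)) {A : Finset ℕ} (hA : A ⊆ range n) :
    Aof hn (FP hn π A) = A := by
  ext w
  by_cases hw : w < n
  · rw [mem_Aof hn _ hw]
    set v : Fin (2*n) := ⟨w, by omega⟩ with hv
    have key2 := FP_mem_Vset_iff hn π A ((FP hn π A).symm v)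
    rw [Equiv.apply_symm_apply] at key2
    have key3 : v ∈ Vset hn A ↔ w ∉ A := mem_Vset_small hn hw
    have hslt := ((FP hn π A).symm v).isLt
    constructor
    · intro hge
      by_contra hwA
      exact absurd (key2.1 (key3.2 hwA)) (by omega)
    · intro hwA
      by_contra hlt
      exact absurd (key3.1 (key2.2 (by omega))) (by simp [hwA])
  · constructor
    · intro hc; exact absurd (mem_range.1 (Aof_subset hn _ hc)) hw
    · intro hc; exact absurd (mem_range.1 (hA hc)) hw


lemma FP_lt_FP_val (hn : 0 < n) (π : Equiv.Perm (Fin n)) (A : Finset ℕ) (a b : ℕ)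
    (ha2 : a < 2*n) (hb2 : b < 2*n) (han : a < n) (hbn : b < n) :
    (FP hn π A ⟨a, ha2⟩ < FP hn π A ⟨b, hb2⟩) ↔ π ⟨a, han⟩ < π ⟨b, hbn⟩ := by
  rw [FP_lt_FP hn π A ⟨a, ha2⟩ ⟨b, hb2⟩ han hbn]

lemma FP_top_lt (hn : 0 < n) (hn2 : 2 ≤ n) (π : Equiv.Perm (Fin n)) {A : Finset ℕ}
    (hA : A ⊆ range n) (pf : n < 2*n) (pf2 : n-1 < 2*n) :
    (FP hn π A ⟨n, pf⟩ < FP hn π A ⟨n-1, pf2⟩)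
      ↔ n - A.card ≤ ((π ⟨n-1, by omega⟩ : Fin n) : ℕ) := by
  have e2 : FP hn π A ⟨n, pf⟩ = (ordV hn A (π ⟨n-1, by omega⟩)).rev := by
    rw [FP_large hn π A ⟨n, pf⟩ (by show ¬ n < n; omega)]
    refine congrArg Fin.rev (congrArg (ordV hn A) (congrArg (⇑π) (Fin.ext ?_)))
    show 2*n-1-n = n-1
    omega
  have e1 : FP hn π A ⟨n-1, pf2⟩ = ordV hn A (π ⟨n-1, by omega⟩) := by
    rw [FP_small hn π A ⟨n-1, pf2⟩ (by show n-1 < n; omega)]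
  rw [e1, e2, Fin.lt_def, rev_val]
  set x := ordV hn A (π ⟨n-1, by omega⟩) with hx
  have hxlt := x.isLt
  have hsmall := ordV_small_iff hn hA (π ⟨n-1, by omega⟩)
  rw [← hx] at hsmall
  constructor
  · intro hlt
    by_contra hc
    push_neg at hc
    have := hsmall.2 hc
    omega
  · intro hge
    have hxn : ¬ ((x : Fin (2*n)) : ℕ) < n := fun hcc => by
      have := hsmall.1 hcc; omega
    omega

lemma isPeakHat_FP_iff (hn : 0 < n) (π : Equiv.Perm (Fin n)) (A : Finset ℕ) (i : ℕ)
    (hi : i < n) : IsPeakHat n (FP hn π A) i ↔ IsPeak π i := by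
  constructor
  · rintro ⟨⟨h1, h2⟩, ha, hb⟩
    refine ⟨⟨h1, hi⟩, ?_, ?_⟩
    · exact (FP_lt_FP_val hn π A (i-2) (i-1) (by omega) (by omega) (by omega) (by omega)).1 ha
    · exact (FP_lt_FP_val hn π A i (i-1) (by omega) (by omega) (by omega) (by omega)).1 hb
  · rintro ⟨⟨h1, h2⟩, ha, hb⟩
    refine ⟨⟨h1, by omega⟩, ?_, ?_⟩
    · exact (FP_lt_FP_val hn π A (i-2) (i-1) (by omega) (by omega) (by omega) (by omega)).2 ha
    · exact (FP_lt_FP_val hn π A i (i-1) (by omega) (by omega) (by omega) (by omega)).2 hb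

lemma isPeakHat_FP_top (hn : 0 < n) (hn2 : 2 ≤ n) (π : Equiv.Perm (Fin n)) {A : Finset ℕ}
    (hA : A ⊆ range n) :
    IsPeakHat n (FP hn π A) n ↔
      (π ⟨n-2, by omega⟩ < π ⟨n-1, by omega⟩
        ∧ n - A.card ≤ ((π ⟨n-1, by omega⟩ : Fin n) : ℕ)) := by
  constructor
  · rintro ⟨⟨h1, h2⟩, ha, hb⟩
    exact ⟨(FP_lt_FP_val hn π A (n-2) (n-1) (by omega) (by omega) (by omega) (by omega)).1 ha,
      (FP_top_lt hn hn2 π hA (by omega) (by omega)).1 hb⟩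
  · rintro ⟨ha, hb⟩
    exact ⟨⟨by omega, le_refl n⟩,
      (FP_lt_FP_val hn π A (n-2) (n-1) (by omega) (by omega) (by omega) (by omega)).2 ha,
      (FP_top_lt hn hn2 π hA (by omega) (by omega)).2 hb⟩

lemma FP_mem_mirroredD (hn : 0 < n) (π : Equiv.Perm (Fin n)) {A : Finset ℕ}
    (hA : A ⊆ range n) :
    FP hn π A ∈ mirroredD n ↔ Even A.card := by
  unfold mirroredD
  simp only [Set.mem_setOf_eq]
  rw [and_iff_right (fun j => FP_mirror hn π A j)]
  have h := card_pos_filter hn π hA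
  constructor
  · intro hev
    rw [← h]
    convert hev using 2
  · intro hev
    convert (h ▸ hev : Even (univ.filter fun j : Fin (2*n) =>
      (j:ℕ) < n ∧ n ≤ ((FP hn π A j : Fin (2*n)) : ℕ)).card) using 2

lemma FP_mem_hatPD_iff (hn : 0 < n) (π : Equiv.Perm (Fin n)) {A : Finset ℕ}
    (hA : A ⊆ range n) (S' : Finset ℕ) :
    FP hn π A ∈ hatPD n S'
      ↔ (Even A.card ∧ ∀ i : ℕ, IsPeakHat n (FP hn π A) i ↔ i ∈ S') := by
  unfold hatPD
  rw [Set.mem_sep_iff, FP_mem_mirroredD hn π hA]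

lemma hatPD_ncard (hn : 0 < n) (S' : Finset ℕ) :
    (hatPD n S').ncard = ∑ π : Equiv.Perm (Fin n),
      ((range n).powerset.filter
        (fun A => Even A.card ∧ ∀ i : ℕ, IsPeakHat n (FP hn π A) i ↔ i ∈ S')).card := by
  classical
  have hset : hatPD n S' = ↑(univ.filter (fun τ : Equiv.Perm (Fin (2*n)) => τ ∈ hatPD n S')) := by
    ext τ; simp
  rw [hset, Set.ncard_coe_finset]
  rw [Finset.card_eq_sum_card_fiberwise (f := pattP hn) (t := univ) (fun τ _ => mem_univ _)]
  refine Finset.sum_congr rfl fun π _ => ?_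
  refine Finset.card_bij' (i := fun τ _ => Aof hn τ) (j := fun A _ => FP hn π A)
    ?_ ?_ ?_ ?_
  · intro τ hτ
    simp only [mem_filter, mem_univ, true_and] at hτ
    obtain ⟨hmem, hpat⟩ := hτ
    obtain ⟨⟨hmir, hev⟩, hpk⟩ := hmem
    have hrec : FP hn π (Aof hn τ) = τ := by
      rw [← hpat]; exact FP_reconstruct hn hmir
    simp only [mem_filter, mem_powerset]
    refine ⟨Aof_subset hn τ, ?_, ?_⟩
    · rw [← card_Aof hn hmir]
      convert hev using 2
    · rw [hrec]; exact hpk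
  · intro A hA2
    simp only [mem_filter, mem_powerset] at hA2
    obtain ⟨hA, hev, hpk⟩ := hA2
    simp only [mem_filter, mem_univ, true_and]
    exact ⟨(FP_mem_hatPD_iff hn π hA S').2 ⟨hev, hpk⟩, pattP_FP hn π A⟩
  · intro τ hτ
    show FP hn π (Aof hn τ) = τ
    simp only [mem_filter, mem_univ, true_and] at hτ
    obtain ⟨hmem, hpat⟩ := hτ
    obtain ⟨⟨hmir, _⟩, _⟩ := hmem
    rw [← hpat]; exact FP_reconstruct hn hmir
  · intro A hA2
    show Aof hn (FP hn π A) = A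
    simp only [mem_filter, mem_powerset] at hA2
    exact Aof_FP hn π hA2.1


lemma sum_pairs (f : ℕ → ℕ) (a : ℕ) (ha : 1 ≤ a) (b : ℕ) :
    ∑ u ∈ Icc a b, (f (2*u-1) + f (2*u)) = ∑ i ∈ Icc (2*a-1) (2*b), f i := by
  induction b with
  | zero =>
    rw [Icc_eq_empty (by omega), Icc_eq_empty (by omega), sum_empty, sum_empty]
  | succ b ih =>
    by_cases hab : a ≤ b + 1
    · rw [Finset.sum_Icc_succ_top hab, ih]
      have e1 : 2*(b+1)-1 = 2*b+1 := by omega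
      have e2 : 2*(b+1) = (2*b+1)+1 := by omega
      rw [e1, e2,
        Finset.sum_Icc_succ_top (show 2*a-1 ≤ (2*b+1)+1 by omega),
        Finset.sum_Icc_succ_top (show 2*a-1 ≤ 2*b+1 by omega)]
      ring
    · rw [Icc_eq_empty (by omega), Icc_eq_empty (by omega), sum_empty, sum_empty]

lemma card_powerset_filter (P : ℕ → Prop) [DecidablePred P] :
    ((range n).powerset.filter (fun A => P A.card)).card
      = ∑ t ∈ range (n+1), if P t then n.choose t else 0 := by
  classical
  rw [Finset.card_eq_sum_card_fiberwise (f := fun A : Finset ℕ => A.card) (t := range (n+1))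
    (fun A hA => by
      dsimp only
      simp only [Finset.mem_coe, mem_filter, mem_powerset] at hA
      have := card_le_card hA.1
      rw [card_range] at this
      exact mem_range.2 (by omega))]
  refine Finset.sum_congr rfl fun t ht => ?_
  by_cases hP : P t
  · rw [if_pos hP]
    have he : ((range n).powerset.filter (fun A => P A.card)).filter (fun A => A.card = t)
        = (range n).powersetCard t := by
      ext A
      simp only [mem_filter, mem_powerset, Finset.mem_powersetCard]
      constructor
      · rintro ⟨⟨h1, _⟩, h3⟩; exact ⟨h1, h3⟩
      · rintro ⟨h1, h2⟩; exact ⟨⟨h1, h2 ▸ hP⟩, h2⟩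
    rw [he, Finset.card_powersetCard, card_range]
  · rw [if_neg hP]
    refine Finset.card_eq_zero.2 (Finset.eq_empty_iff_forall_notMem.2 ?_)
    intro A hA
    simp only [mem_filter, mem_powerset] at hA
    exact hP (hA.2 ▸ hA.1.2)

lemma cntEven (hn : 0 < n) :
    ((range n).powerset.filter (fun A => Even A.card)).card = 2^(n-1) := by
  classical
  rw [card_powerset_filter (P := fun t => Even t)]
  have hEO : (∑ t ∈ range (n+1), if Even t then (n.choose t : ℤ) else 0)
      = ∑ t ∈ range (n+1), if ¬ Even t then (n.choose t : ℤ) else 0 := by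
    have halt := Int.alternating_sum_range_choose (n := n)
    rw [if_neg (by omega : ¬ n = 0)] at halt
    have hsplit : ∑ t ∈ range (n+1), ((-1 : ℤ)^t * n.choose t)
        = ∑ t ∈ range (n+1), ((if Even t then (n.choose t : ℤ) else 0)
            - (if ¬ Even t then (n.choose t : ℤ) else 0)) := by
      refine Finset.sum_congr rfl fun t _ => ?_
      by_cases he : Even t
      · rw [if_pos he, if_neg (not_not_intro he), he.neg_one_pow]; ring
      · rw [if_neg he, if_pos he, (Nat.not_even_iff_odd.1 he).neg_one_pow]; ring
    rw [hsplit, Finset.sum_sub_distrib] at halt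
    exact sub_eq_zero.mp halt
  have hsumN : (∑ t ∈ range (n+1), if Even t then n.choose t else 0)
      + (∑ t ∈ range (n+1), if ¬ Even t then n.choose t else 0) = 2^n := by
    rw [← Finset.sum_add_distrib, ← Nat.sum_range_choose n]
    refine Finset.sum_congr rfl fun t _ => ?_
    by_cases he : Even t <;> simp [he]
  have hcast : (∑ t ∈ range (n+1), if Even t then n.choose t else 0)
      = (∑ t ∈ range (n+1), if ¬ Even t then n.choose t else 0) := by
    exact_mod_cast hEO
  have hpow : 2^n = 2 * 2^(n-1) := by
    rw [← pow_succ']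
    congr 1
    omega
  omega

lemma pascal (N j : ℕ) (hN : 1 ≤ N) (hj : 1 ≤ j) :
    N.choose j = (N-1).choose (j-1) + (N-1).choose j := by
  obtain ⟨N', rfl⟩ : ∃ N', N = N'+1 := ⟨N-1, by omega⟩
  obtain ⟨j', rfl⟩ : ∃ j', j = j'+1 := ⟨j-1, by omega⟩
  simp [Nat.choose_succ_succ]

lemma sumEvenLe (heven : Even n) (hn2 : 2 ≤ n) {k' : ℕ} (hk1 : 1 ≤ k') (hk2 : k' ≤ n/2) :
    (∑ t ∈ range (n+1), if Even t ∧ t ≤ n - 2*k' then n.choose t else 0)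
      = Phi (n-1) (2*k'-1) := by
  obtain ⟨m, hm⟩ := heven
  have hn2k : 2*k' ≤ n := by omega
  rw [← Finset.sum_filter]
  have hf : (range (n+1)).filter (fun t => Even t ∧ t ≤ n - 2*k')
      = (range (m - k' + 1)).image (fun s => 2*s) := by
    ext t
    simp only [mem_filter, mem_range, mem_image, Nat.even_iff]
    constructor
    · rintro ⟨h1, h2, h3⟩
      exact ⟨t/2, by omega, by omega⟩
    · rintro ⟨s, hs, rfl⟩
      omega
  rw [hf, Finset.sum_image (by intro a _ b _ h; simp only at h; omega)]
  have hstep2 : ∑ s ∈ range (m - k' + 1), n.choose (2*s)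
      = ∑ u ∈ Icc k' m, n.choose (2*u) := by
    refine Finset.sum_nbij' (i := fun s => m - s) (j := fun u => m - u) ?_ ?_ ?_ ?_ ?_
    · intro s hs
      rw [mem_range] at hs
      rw [mem_Icc]
      omega
    · intro u hu
      rw [mem_Icc] at hu
      rw [mem_range]
      omega
    · intro s hs
      rw [mem_range] at hs
      omega
    · intro u hu
      rw [mem_Icc] at hu
      omega
    · intro s hs
      rw [mem_range] at hs
      rw [show 2*(m-s) = n - 2*s by omega, Nat.choose_symm (by omega)]
  rw [hstep2]
  have hstep3 : ∑ u ∈ Icc k' m, n.choose (2*u)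
      = ∑ u ∈ Icc k' m, ((n-1).choose (2*u-1) + (n-1).choose (2*u)) := by
    refine Finset.sum_congr rfl fun u hu => ?_
    rw [mem_Icc] at hu
    rw [pascal n (2*u) (by omega) (by omega)]
  rw [hstep3, sum_pairs (fun i => (n-1).choose i) k' hk1 m]
  unfold Phi
  rw [show 2*m = (n-1)+1 by omega,
    Finset.sum_Icc_succ_top (by omega : 2*k'-1 ≤ (n-1)+1),
    Nat.choose_succ_self, add_zero]


lemma peakcond_base (hn : 0 < n) (hn2 : 2 ≤ n) (π : Equiv.Perm (Fin n)) {A : Finset ℕ}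
    (hA : A ⊆ range n) {S : Finset ℕ} (hS : ∀ x ∈ S, 0 < x ∧ x < n) :
    (∀ i : ℕ, IsPeakHat n (FP hn π A) i ↔ i ∈ S)
      ↔ (π ∈ peakSetEq n S
          ∧ ¬(π ⟨n-2, by omega⟩ < π ⟨n-1, by omega⟩
              ∧ n - A.card ≤ ((π ⟨n-1, by omega⟩ : Fin n) : ℕ))) := by
  constructor
  · intro hpk
    constructor
    · simp only [peakSetEq, Set.mem_setOf_eq]
      intro i
      by_cases hi : i < n
      · rw [← isPeakHat_FP_iff hn π A i hi]
        exact hpk i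
      · constructor
        · rintro ⟨⟨_, h2⟩, _⟩; omega
        · intro hiS; exact absurd (hS i hiS).2 hi
    · intro hcond
      have := (hpk n).1 ((isPeakHat_FP_top hn hn2 π hA).2 hcond)
      exact absurd (hS n this).2 (lt_irrefl n)
  · rintro ⟨hps, hnot⟩ i
    simp only [peakSetEq, Set.mem_setOf_eq] at hps
    by_cases hi : i < n
    · rw [isPeakHat_FP_iff hn π A i hi]
      exact hps i
    · by_cases hin : i = n
      · subst hin
        rw [isPeakHat_FP_top hn hn2 π hA]
        constructor
        · intro hc; exact absurd hc hnot
        · intro hiS; exact absurd (hS i hiS).2 (lt_irrefl i)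
      · constructor
        · rintro ⟨⟨_, h2⟩, _⟩; omega
        · intro hiS; exact absurd (hS i hiS).2 hi

lemma peakcond_insert (hn : 0 < n) (hn2 : 2 ≤ n) (π : Equiv.Perm (Fin n)) {A : Finset ℕ}
    (hA : A ⊆ range n) {S : Finset ℕ} (hS : ∀ x ∈ S, 0 < x ∧ x < n) :
    (∀ i : ℕ, IsPeakHat n (FP hn π A) i ↔ i ∈ insert n S)
      ↔ (π ∈ peakSetEq n S
          ∧ (π ⟨n-2, by omega⟩ < π ⟨n-1, by omega⟩
              ∧ n - A.card ≤ ((π ⟨n-1, by omega⟩ : Fin n) : ℕ))) := by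
  constructor
  · intro hpk
    constructor
    · simp only [peakSetEq, Set.mem_setOf_eq]
      intro i
      by_cases hi : i < n
      · rw [← isPeakHat_FP_iff hn π A i hi, hpk i, Finset.mem_insert]
        constructor
        · rintro (rfl | h)
          · omega
          · exact h
        · intro h; exact Or.inr h
      · constructor
        · rintro ⟨⟨_, h2⟩, _⟩; omega
        · intro hiS; exact absurd (hS i hiS).2 hi
    · exact (isPeakHat_FP_top hn hn2 π hA).1
        ((hpk n).2 (Finset.mem_insert_self n S))
  · rintro ⟨hps, hcond⟩ i
    simp only [peakSetEq, Set.mem_setOf_eq] at hps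
    by_cases hi : i < n
    · rw [isPeakHat_FP_iff hn π A i hi, hps i, Finset.mem_insert]
      constructor
      · intro h; exact Or.inr h
      · rintro (rfl | h)
        · omega
        · exact h
    · by_cases hin : i = n
      · subst hin
        rw [isPeakHat_FP_top hn hn2 π hA]
        simp only [Finset.mem_insert_self, iff_true]
        exact hcond
      · constructor
        · rintro ⟨⟨_, h2⟩, _⟩; omega
        · rw [Finset.mem_insert]
          rintro (rfl | hiS)
          · exact absurd rfl hin
          · exact absurd (hS i hiS).2 hi

lemma inner_card_base (hn : 0 < n) (hn2 : 2 ≤ n) (π : Equiv.Perm (Fin n))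
    {S : Finset ℕ} (hS : ∀ x ∈ S, 0 < x ∧ x < n) :
    ((range n).powerset.filter
        (fun A => Even A.card ∧ ∀ i : ℕ, IsPeakHat n (FP hn π A) i ↔ i ∈ S)).card
      = if π ∈ peakSetEq n S then
          (if π ⟨n-2, by omega⟩ < π ⟨n-1, by omega⟩ then
            (∑ t ∈ range (n+1),
              if Even t ∧ t ≤ n - (((π ⟨n-1, by omega⟩ : Fin n) : ℕ)+1)
              then n.choose t else 0)
          else 2^(n-1))
        else 0 := by
  classical
  have hcong : ∀ A ∈ (range n).powerset,
      ((Even A.card ∧ ∀ i : ℕ, IsPeakHat n (FP hn π A) i ↔ i ∈ S)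
        ↔ (Even A.card ∧ (π ∈ peakSetEq n S
            ∧ ¬(π ⟨n-2, by omega⟩ < π ⟨n-1, by omega⟩
                ∧ n - A.card ≤ ((π ⟨n-1, by omega⟩ : Fin n) : ℕ))))) := by
    intro A hA
    rw [mem_powerset] at hA
    rw [peakcond_base hn hn2 π hA hS]
  rw [Finset.filter_congr hcong]
  by_cases h1 : π ∈ peakSetEq n S
  · rw [if_pos h1]
    by_cases h2 : π ⟨n-2, by omega⟩ < π ⟨n-1, by omega⟩
    · rw [if_pos h2]
      have hplt := (π ⟨n-1, by omega⟩).isLt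
      have hc2 : ∀ A ∈ (range n).powerset,
          ((Even A.card ∧ (π ∈ peakSetEq n S
              ∧ ¬(π ⟨n-2, by omega⟩ < π ⟨n-1, by omega⟩
                  ∧ n - A.card ≤ ((π ⟨n-1, by omega⟩ : Fin n) : ℕ))))
            ↔ (Even A.card
                ∧ A.card ≤ n - (((π ⟨n-1, by omega⟩ : Fin n) : ℕ)+1))) := by
        intro A hA
        rw [mem_powerset] at hA
        have hcard : A.card ≤ n := by
          have := card_le_card hA; rwa [card_range] at this
        constructor
        · rintro ⟨he, -, hno⟩
          refine ⟨he, ?_⟩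
          by_contra hc
          exact hno ⟨h2, by omega⟩
        · rintro ⟨he, hle⟩
          exact ⟨he, h1, fun hc => absurd hc.2 (by omega)⟩
      rw [Finset.filter_congr hc2]
      exact card_powerset_filter
        (P := fun t => Even t ∧ t ≤ n - (((π ⟨n-1, by omega⟩ : Fin n) : ℕ)+1))
    · rw [if_neg h2]
      have hc2 : ∀ A ∈ (range n).powerset,
          ((Even A.card ∧ (π ∈ peakSetEq n S
              ∧ ¬(π ⟨n-2, by omega⟩ < π ⟨n-1, by omega⟩
                  ∧ n - A.card ≤ ((π ⟨n-1, by omega⟩ : Fin n) : ℕ))))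
            ↔ Even A.card) := by
        intro A _
        constructor
        · rintro ⟨he, -⟩; exact he
        · intro he; exact ⟨he, h1, fun hc => absurd hc.1 h2⟩
      rw [Finset.filter_congr hc2]
      exact cntEven hn
  · rw [if_neg h1]
    have hc2 : ∀ A ∈ (range n).powerset,
        ¬ (Even A.card ∧ (π ∈ peakSetEq n S
            ∧ ¬(π ⟨n-2, by omega⟩ < π ⟨n-1, by omega⟩
                ∧ n - A.card ≤ ((π ⟨n-1, by omega⟩ : Fin n) : ℕ)))) :=
      fun A _ hc => h1 hc.2.1
    rw [Finset.filter_false_of_mem hc2, card_empty]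

lemma cntEvenGe (hn : 0 < n) (c : ℕ) :
    ((range n).powerset.filter (fun A => Even A.card ∧ ¬ (A.card ≤ c))).card
      = 2^(n-1) - (∑ t ∈ range (n+1), if Even t ∧ t ≤ c then n.choose t else 0) := by
  classical
  have hsplit := Finset.card_filter_add_card_filter_not
    (s := (range n).powerset.filter (fun A => Even A.card)) (p := fun A => A.card ≤ c)
  rw [Finset.filter_filter, Finset.filter_filter, cntEven hn] at hsplit
  have h1 : ((range n).powerset.filter (fun A => Even A.card ∧ A.card ≤ c)).card
      = ∑ t ∈ range (n+1), if Even t ∧ t ≤ c then n.choose t else 0 :=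
    card_powerset_filter (P := fun t => Even t ∧ t ≤ c)
  omega

lemma inner_card_insert (hn : 0 < n) (hn2 : 2 ≤ n) (π : Equiv.Perm (Fin n))
    {S : Finset ℕ} (hS : ∀ x ∈ S, 0 < x ∧ x < n) :
    ((range n).powerset.filter
        (fun A => Even A.card ∧ ∀ i : ℕ, IsPeakHat n (FP hn π A) i ↔ i ∈ insert n S)).card
      = if π ∈ peakSetEq n S ∧ π ⟨n-2, by omega⟩ < π ⟨n-1, by omega⟩ then
          2^(n-1) - (∑ t ∈ range (n+1),
            if Even t ∧ t ≤ n - (((π ⟨n-1, by omega⟩ : Fin n) : ℕ)+1)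
            then n.choose t else 0)
        else 0 := by
  classical
  have hcong : ∀ A ∈ (range n).powerset,
      ((Even A.card ∧ ∀ i : ℕ, IsPeakHat n (FP hn π A) i ↔ i ∈ insert n S)
        ↔ (Even A.card ∧ (π ∈ peakSetEq n S
            ∧ (π ⟨n-2, by omega⟩ < π ⟨n-1, by omega⟩
                ∧ n - A.card ≤ ((π ⟨n-1, by omega⟩ : Fin n) : ℕ))))) := by
    intro A hA
    rw [mem_powerset] at hA
    rw [peakcond_insert hn hn2 π hA hS]
  rw [Finset.filter_congr hcong]
  by_cases h1 : π ∈ peakSetEq n S ∧ π ⟨n-2, by omega⟩ < π ⟨n-1, by omega⟩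
  · rw [if_pos h1]
    have hplt := (π ⟨n-1, by omega⟩).isLt
    have hc2 : ∀ A ∈ (range n).powerset,
        ((Even A.card ∧ (π ∈ peakSetEq n S
            ∧ (π ⟨n-2, by omega⟩ < π ⟨n-1, by omega⟩
                ∧ n - A.card ≤ ((π ⟨n-1, by omega⟩ : Fin n) : ℕ))))
          ↔ (Even A.card
              ∧ ¬ (A.card ≤ n - (((π ⟨n-1, by omega⟩ : Fin n) : ℕ)+1)))) := by
      intro A hA
      rw [mem_powerset] at hA
      have hcard : A.card ≤ n := by
        have := card_le_card hA; rwa [card_range] at this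
      constructor
      · rintro ⟨he, -, -, hge⟩
        exact ⟨he, by omega⟩
      · rintro ⟨he, hgt⟩
        exact ⟨he, h1.1, h1.2, by omega⟩
    rw [Finset.filter_congr hc2]
    exact cntEvenGe hn _
  · rw [if_neg h1]
    have hc2 : ∀ A ∈ (range n).powerset,
        ¬ (Even A.card ∧ (π ∈ peakSetEq n S
            ∧ (π ⟨n-2, by omega⟩ < π ⟨n-1, by omega⟩
                ∧ n - A.card ≤ ((π ⟨n-1, by omega⟩ : Fin n) : ℕ)))) :=
      fun A _ hc => h1 ⟨hc.2.1, hc.2.2.1⟩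
    rw [Finset.filter_false_of_mem hc2, card_empty]

lemma underlineP_ncard (hn2 : 2 ≤ n) (S : Finset ℕ) :
    (underlineP n S).ncard
      = (univ.filter (fun π : Equiv.Perm (Fin n) =>
          π ∈ peakSetEq n S ∧ ¬ (π ⟨n-2, by omega⟩ < π ⟨n-1, by omega⟩))).card := by
  classical
  have hset : underlineP n S = ↑(univ.filter (fun π : Equiv.Perm (Fin n) =>
      π ∈ peakSetEq n S ∧ ¬ (π ⟨n-2, by omega⟩ < π ⟨n-1, by omega⟩))) := by
    ext π
    simp only [underlineP, Set.mem_setOf_eq, coe_filter, mem_univ, true_and, Set.mem_setOf_eq]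
    constructor
    · rintro ⟨hp, ⟨h, hlt⟩⟩
      exact ⟨hp, fun hasc => absurd hasc (lt_asymm hlt)⟩
    · rintro ⟨hp, hnasc⟩
      refine ⟨hp, hn2, ?_⟩
      have hne : π ⟨n-1, by omega⟩ ≠ π ⟨n-2, by omega⟩ := by
        intro hc
        have := π.injective hc
        rw [Fin.mk.injEq] at this
        omega
      exact lt_of_le_of_ne (not_lt.1 hnasc) hne
  rw [hset, Set.ncard_coe_finset]

lemma ascTo_ncard (hn2 : 2 ≤ n) (S : Finset ℕ) (k0 : ℕ) :
    (ascTo n S k0).ncard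
      = ((univ.filter (fun π : Equiv.Perm (Fin n) =>
          π ∈ peakSetEq n S ∧ π ⟨n-2, by omega⟩ < π ⟨n-1, by omega⟩)).filter
            (fun π => ((π ⟨n-1, by omega⟩ : Fin n) : ℕ) + 1 = k0)).card := by
  classical
  have hset : ascTo n S k0 = ↑((univ.filter (fun π : Equiv.Perm (Fin n) =>
      π ∈ peakSetEq n S ∧ π ⟨n-2, by omega⟩ < π ⟨n-1, by omega⟩)).filter
        (fun π => ((π ⟨n-1, by omega⟩ : Fin n) : ℕ) + 1 = k0)) := by
    ext π
    simp only [ascTo, Set.mem_setOf_eq, coe_filter, mem_filter, mem_univ, true_and,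
      Set.mem_setOf_eq]
    constructor
    · rintro ⟨hp, ⟨h, hlt, hk⟩⟩
      exact ⟨⟨hp, hlt⟩, hk⟩
    · rintro ⟨⟨hp, hlt⟩, hk⟩
      exact ⟨hp, hn2, hlt, hk⟩
  rw [hset, Set.ncard_coe_finset]


lemma cEq (heven : Even n) (hn2 : 2 ≤ n) {k' : ℕ} (hk1 : 1 ≤ k') (hk2 : k' ≤ n/2) :
    (∑ t ∈ range (n+1), if Even t ∧ t ≤ n - (2*k'-1) then n.choose t else 0)
      = Phi (n-1) (2*k'-1) := by
  rw [← sumEvenLe heven hn2 hk1 hk2]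
  obtain ⟨m, hm⟩ := heven
  have h2k : 2*k' ≤ n := by omega
  refine Finset.sum_congr rfl fun t ht => ?_
  by_cases he : Even t
  · obtain ⟨r, hr⟩ := he
    by_cases hle : t ≤ n - 2*k'
    · rw [if_pos ⟨⟨r, hr⟩, by omega⟩, if_pos ⟨⟨r, hr⟩, hle⟩]
    · rw [if_neg (fun hc => hle (by omega)), if_neg (fun hc => hle hc.2)]
  · rw [if_neg (fun hc => he hc.1), if_neg (fun hc => he hc.1)]

lemma main_sum_base (hn0 : 0 < n) (hn2 : 2 ≤ n) (heven : Even n)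
    {S : Finset ℕ} (hS : ∀ x ∈ S, 0 < x ∧ x < n) :
    (hatPD n S).ncard =
      (∑ k ∈ Finset.Icc 1 (n / 2),
        ((ascTo n S (2*k-1)).ncard + (ascTo n S (2*k)).ncard) * Phi (n-1) (2*k-1))
        + (underlineP n S).ncard * 2^(n-1) := by
  classical
  rw [hatPD_ncard hn0 S,
    Finset.sum_congr rfl (fun π _ => inner_card_base hn0 hn2 π hS),
    ← Finset.sum_filter, Finset.sum_ite]
  congr 1
  · -- ascending part
    rw [← Finset.sum_fiberwise_of_maps_to
      (g := fun π : Equiv.Perm (Fin n) => ((π ⟨n-1, by omega⟩ : Fin n) : ℕ) + 1)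
      (t := Icc 1 n)
      (fun π _ => by
        rw [mem_Icc]
        have := (π ⟨n-1, by omega⟩).isLt
        omega)]
    have hinner : ∀ k0 ∈ Icc 1 n,
        (∑ π ∈ (((univ.filter (fun π : Equiv.Perm (Fin n) => π ∈ peakSetEq n S)).filter
              (fun π => π ⟨n-2, by omega⟩ < π ⟨n-1, by omega⟩)).filter
                (fun π => ((π ⟨n-1, by omega⟩ : Fin n) : ℕ) + 1 = k0)),
            (∑ t ∈ range (n+1),
              if Even t ∧ t ≤ n - (((π ⟨n-1, by omega⟩ : Fin n) : ℕ)+1)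
              then n.choose t else 0))
          = (ascTo n S k0).ncard
            * (∑ t ∈ range (n+1), if Even t ∧ t ≤ n - k0 then n.choose t else 0) := by
      intro k0 hk0
      have hc : (∑ π ∈ (((univ.filter (fun π : Equiv.Perm (Fin n) => π ∈ peakSetEq n S)).filter
              (fun π => π ⟨n-2, by omega⟩ < π ⟨n-1, by omega⟩)).filter
                (fun π => ((π ⟨n-1, by omega⟩ : Fin n) : ℕ) + 1 = k0)),
            (∑ t ∈ range (n+1),
              if Even t ∧ t ≤ n - (((π ⟨n-1, by omega⟩ : Fin n) : ℕ)+1)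
              then n.choose t else 0))
          = ∑ _π ∈ (((univ.filter (fun π : Equiv.Perm (Fin n) => π ∈ peakSetEq n S)).filter
              (fun π => π ⟨n-2, by omega⟩ < π ⟨n-1, by omega⟩)).filter
                (fun π => ((π ⟨n-1, by omega⟩ : Fin n) : ℕ) + 1 = k0)),
            (∑ t ∈ range (n+1), if Even t ∧ t ≤ n - k0 then n.choose t else 0) := by
        refine Finset.sum_congr rfl fun π hπ => ?_
        rw [mem_filter] at hπ
        have hk := hπ.2
        rw [hk]
      rw [hc, Finset.sum_const, smul_eq_mul]
      congr 1
      rw [ascTo_ncard hn2 S k0]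
      congr 1
      ext π
      simp only [mem_filter, mem_univ, true_and]
    rw [Finset.sum_congr rfl hinner]
    have hpair := sum_pairs (fun k0 => (ascTo n S k0).ncard
        * (∑ t ∈ range (n+1), if Even t ∧ t ≤ n - k0 then n.choose t else 0)) 1 le_rfl (n/2)
    rw [show 2*1-1 = 1 by omega,
      show 2*(n/2) = n from by obtain ⟨m, hm⟩ := heven; omega] at hpair
    rw [← hpair]
    refine Finset.sum_congr rfl fun k' hk' => ?_
    rw [mem_Icc] at hk'
    rw [cEq heven hn2 hk'.1 hk'.2, sumEvenLe heven hn2 hk'.1 hk'.2, add_mul]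
  · -- descending part
    rw [Finset.sum_const, smul_eq_mul, underlineP_ncard hn2 S]
    congr 1
    rw [Finset.filter_filter]

lemma main_sum_insert (hn0 : 0 < n) (hn2 : 2 ≤ n) (heven : Even n)
    {S : Finset ℕ} (hS : ∀ x ∈ S, 0 < x ∧ x < n) :
    (hatPD n (insert n S)).ncard =
      ∑ k ∈ Finset.Icc 1 (n / 2),
        ((ascTo n S (2*k-1)).ncard + (ascTo n S (2*k)).ncard) * Psi (n-1) (2*k-1) := by
  classical
  rw [hatPD_ncard hn0 (insert n S),
    Finset.sum_congr rfl (fun π _ => inner_card_insert hn0 hn2 π hS),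
    ← Finset.sum_filter]
  rw [← Finset.sum_fiberwise_of_maps_to
    (g := fun π : Equiv.Perm (Fin n) => ((π ⟨n-1, by omega⟩ : Fin n) : ℕ) + 1)
    (t := Icc 1 n)
    (fun π _ => by
      rw [mem_Icc]
      have := (π ⟨n-1, by omega⟩).isLt
      omega)]
  have hinner : ∀ k0 ∈ Icc 1 n,
      (∑ π ∈ ((univ.filter (fun π : Equiv.Perm (Fin n) =>
            π ∈ peakSetEq n S ∧ π ⟨n-2, by omega⟩ < π ⟨n-1, by omega⟩)).filter
              (fun π => ((π ⟨n-1, by omega⟩ : Fin n) : ℕ) + 1 = k0)),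
          (2^(n-1) - ∑ t ∈ range (n+1),
            if Even t ∧ t ≤ n - (((π ⟨n-1, by omega⟩ : Fin n) : ℕ)+1)
            then n.choose t else 0))
        = (ascTo n S k0).ncard
          * (2^(n-1) - ∑ t ∈ range (n+1), if Even t ∧ t ≤ n - k0 then n.choose t else 0) := by
    intro k0 hk0
    have hc : (∑ π ∈ ((univ.filter (fun π : Equiv.Perm (Fin n) =>
            π ∈ peakSetEq n S ∧ π ⟨n-2, by omega⟩ < π ⟨n-1, by omega⟩)).filter
              (fun π => ((π ⟨n-1, by omega⟩ : Fin n) : ℕ) + 1 = k0)),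
          (2^(n-1) - ∑ t ∈ range (n+1),
            if Even t ∧ t ≤ n - (((π ⟨n-1, by omega⟩ : Fin n) : ℕ)+1)
            then n.choose t else 0))
        = ∑ _π ∈ ((univ.filter (fun π : Equiv.Perm (Fin n) =>
            π ∈ peakSetEq n S ∧ π ⟨n-2, by omega⟩ < π ⟨n-1, by omega⟩)).filter
              (fun π => ((π ⟨n-1, by omega⟩ : Fin n) : ℕ) + 1 = k0)),
          (2^(n-1) - ∑ t ∈ range (n+1),
            if Even t ∧ t ≤ n - k0 then n.choose t else 0) := by
      refine Finset.sum_congr rfl fun π hπ => ?_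
      rw [mem_filter] at hπ
      have hk := hπ.2
      rw [hk]
    rw [hc, Finset.sum_const, smul_eq_mul]
    congr 1
    exact (ascTo_ncard hn2 S k0).symm
  rw [Finset.sum_congr rfl hinner]
  have hpair := sum_pairs (fun k0 => (ascTo n S k0).ncard
      * (2^(n-1) - ∑ t ∈ range (n+1), if Even t ∧ t ≤ n - k0 then n.choose t else 0))
      1 le_rfl (n/2)
  rw [show 2*1-1 = 1 by omega,
    show 2*(n/2) = n from by obtain ⟨m, hm⟩ := heven; omega] at hpair
  rw [← hpair]
  refine Finset.sum_congr rfl fun k' hk' => ?_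
  rw [mem_Icc] at hk'
  rw [cEq heven hn2 hk'.1 hk'.2, sumEvenLe heven hn2 hk'.1 hk'.2, add_mul]
  rfl

-- MORE5

end S15

theorem stmt15 (n : ℕ) (hn : 2 ≤ n) (heven : Even n)
    (S : Finset ℕ) (hS : ∀ x ∈ S, 0 < x ∧ x < n) :
    (hatPD n S).ncard =
      (∑ k ∈ Finset.Icc 1 (n / 2),
        ((ascTo n S (2 * k - 1)).ncard + (ascTo n S (2 * k)).ncard) * Phi (n - 1) (2 * k - 1))
        + (underlineP n S).ncard * 2 ^ (n - 1) ∧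
    (hatPD n (insert n S)).ncard =
      ∑ k ∈ Finset.Icc 1 (n / 2),
        ((ascTo n S (2 * k - 1)).ncard + (ascTo n S (2 * k)).ncard) * Psi (n - 1) (2 * k - 1) := by
  have hn0 : 0 < n := by omega
  refine ⟨?_, ?_⟩
  · have := S15.main_sum_base hn0 hn heven (fun x hx => (hS x hx))
    convert this using 2
  · have := S15.main_sum_insert hn0 hn heven (fun x hx => (hS x hx))
    convert this using 2
end
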